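/- arXiv:1712.08867 — 3 statements merged into one kernel-verified Lean document; each statement's English description precedes it below -/
import Mathlib

section
/- Let π̃ be a stationary probability density for k̃ on Y and define π(x) = ∫_Y s̃(x|γ) π̃(γ) dγ, which is then a stationary density for k on X. Suppose there exists R : Y × {0,1,2,…} → (0,∞) such that for every probability density ν̃ on Y and every m ≥ 0, ∫_Y | ∫_Y k̃^{(m)}(γ,γ') ν̃(γ) dγ − π̃(γ') | dγ' ≤ ∫_Y R(γ,m) ν̃(γ) dγ. Then for every probability density ν on X and every m ≥ 1, ∫_X | ∫_X k^{(m)}(x,x') ν(x) dx − π(x') | dx' ≤ ∫_X ( ∫_Y R(γ,m−1) h̃(γ|x) dγ ) ν(x) dx. -/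
open MeasureTheory

/-- `kIterM μ k m` is the (m+1)-step transition density of the kernel density `k`
with respect to the reference measure `μ`. -/
noncomputable def kIterM {A : Type*} [MeasurableSpace A] (μ : Measure A)
    (k : A → A → ℝ) : ℕ → A → A → ℝ
  | 0 => k
  | m + 1 => fun x y => ∫ z, kIterM μ k m x z * k z y ∂μ

open Function
open scoped ENNReal

set_option linter.unusedSectionVars false

namespace TVAux

variable {A : Type*} [MeasurableSpace A]

noncomputable def lIter (μ : Measure A) (k : A → A → ℝ≥0∞) : ℕ → A → A → ℝ≥0∞
  | 0 => k
  | m + 1 => fun x y => ∫⁻ z, lIter μ k m x z * k z y ∂μ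

noncomputable def pushN (μ : Measure A) (k : A → A → ℝ≥0∞) (f : A → ℝ≥0∞) : ℕ → A → ℝ≥0∞
  | 0 => f
  | m + 1 => fun y => ∫⁻ x, k x y * pushN μ k f m x ∂μ

variable {μ : Measure A} [SFinite μ] {k : A → A → ℝ≥0∞} {f : A → ℝ≥0∞}

lemma lIter_meas (hk : Measurable (uncurry k)) (m : ℕ) :
    Measurable (uncurry (lIter μ k m)) := by
  induction m with
  | zero => exact hk
  | succ m ih =>
    exact Measurable.lintegral_prod_right'
      (f := fun p : (A × A) × A => lIter μ k m p.1.1 p.2 * k p.2 p.1.2)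
      ((ih.comp (measurable_fst.fst.prodMk measurable_snd)).mul
        (hk.comp (measurable_snd.prodMk measurable_fst.snd)))

lemma lIter_mass (hk : Measurable (uncurry k))
    (hmar : ∀ᵐ x ∂μ, ∫⁻ y, k x y ∂μ = 1) (m : ℕ) :
    ∀ᵐ x ∂μ, ∫⁻ y, lIter μ k m x y ∂μ = 1 := by
  induction m with
  | zero => exact hmar
  | succ m ih =>
    filter_upwards [ih] with x hx
    calc ∫⁻ y, ∫⁻ z, lIter μ k m x z * k z y ∂μ ∂μ
        = ∫⁻ z, ∫⁻ y, lIter μ k m x z * k z y ∂μ ∂μ := by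
          refine lintegral_lintegral_swap (f := fun y z => lIter μ k m x z * k z y) ?_
          exact (((lIter_meas hk m).comp (measurable_const.prodMk measurable_snd)).mul
            (hk.comp (measurable_snd.prodMk measurable_fst))).aemeasurable
      _ = ∫⁻ z, lIter μ k m x z * ∫⁻ y, k z y ∂μ ∂μ :=
          lintegral_congr fun z => lintegral_const_mul'' _ (hk.comp measurable_prodMk_left).aemeasurable
      _ = ∫⁻ z, lIter μ k m x z ∂μ := by
          refine lintegral_congr_ae ?_
          filter_upwards [hmar] with z hz
          rw [hz, mul_one]
      _ = 1 := hx

lemma lIter_congr {k' : A → A → ℝ≥0∞} (hk : Measurable (uncurry k))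
    (hk' : Measurable (uncurry k'))
    (h : uncurry k =ᵐ[μ.prod μ] uncurry k') (m : ℕ) :
    uncurry (lIter μ k m) =ᵐ[μ.prod μ] uncurry (lIter μ k' m) := by
  have hmeq : ∀ (f g : A → A → ℝ≥0∞), Measurable (uncurry f) → Measurable (uncurry g) →
      MeasurableSet {p : A × A | f p.1 p.2 = g p.1 p.2} := fun f g hf hg =>
    StronglyMeasurable.measurableSet_eq_fun hf.stronglyMeasurable hg.stronglyMeasurable
  induction m with
  | zero => exact h
  | succ m ih =>
    have h1 : ∀ᵐ x ∂μ, ∀ᵐ z ∂μ, lIter μ k m x z = lIter μ k' m x z :=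
      (Measure.ae_prod_iff_ae_ae (hmeq _ _ (lIter_meas hk m) (lIter_meas hk' m))).mp ih
    have h2 : ∀ᵐ y ∂μ, ∀ᵐ z ∂μ, k z y = k' z y :=
      (Measure.ae_ae_comm (hmeq _ _ hk hk')).mp
        ((Measure.ae_prod_iff_ae_ae (hmeq _ _ hk hk')).mp h)
    refine (Measure.ae_prod_iff_ae_ae
      (hmeq _ _ (lIter_meas hk (m+1)) (lIter_meas hk' (m+1)))).mpr ?_
    filter_upwards [h1] with x hx
    filter_upwards [h2] with y hy
    refine lintegral_congr_ae ?_
    filter_upwards [hx, hy] with z h1z h2z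
    rw [h1z, h2z]

lemma kIterM_nonneg {k : A → A → ℝ} (hk : ∀ x y, 0 ≤ k x y) (m : ℕ) (x y : A) :
    0 ≤ kIterM μ k m x y := by
  induction m generalizing x y with
  | zero => exact hk x y
  | succ m ih =>
    exact integral_nonneg fun z => mul_nonneg (ih x z) (hk z y)

lemma kIterM_meas {k : A → A → ℝ} (hk : Measurable (uncurry k)) (m : ℕ) :
    Measurable (uncurry (kIterM μ k m)) := by
  induction m with
  | zero => exact hk
  | succ m ih =>
    have : StronglyMeasurable (fun p : (A × A) × A => kIterM μ k m p.1.1 p.2 * k p.2 p.1.2) :=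
      ((ih.comp (measurable_fst.fst.prodMk measurable_snd)).mul
        (hk.comp (measurable_snd.prodMk measurable_fst.snd))).stronglyMeasurable
    exact this.integral_prod_right'.measurable

lemma ofReal_kIterM {k : A → A → ℝ} (hk : Measurable (uncurry k)) (hknn : ∀ x y, 0 ≤ k x y)
    (hmar : ∀ᵐ x ∂μ, ∫⁻ y, ENNReal.ofReal (k x y) ∂μ = 1) (m : ℕ) :
    (fun p : A × A => ENNReal.ofReal (kIterM μ k m p.1 p.2))
      =ᵐ[μ.prod μ] uncurry (lIter μ (fun x y => ENNReal.ofReal (k x y)) m) := by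
  set k' : A → A → ℝ≥0∞ := fun x y => ENNReal.ofReal (k x y) with hk'def
  have hk' : Measurable (uncurry k') := ENNReal.measurable_ofReal.comp hk
  have hmeq : ∀ (f g : A → A → ℝ≥0∞), Measurable (uncurry f) → Measurable (uncurry g) →
      MeasurableSet {p : A × A | f p.1 p.2 = g p.1 p.2} := fun f g hf hg =>
    StronglyMeasurable.measurableSet_eq_fun hf.stronglyMeasurable hg.stronglyMeasurable
  induction m with
  | zero => rfl
  | succ m ih =>
    have hmeas1 : Measurable fun p : A × A => ENNReal.ofReal (kIterM μ k (m+1) p.1 p.2) :=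
      ENNReal.measurable_ofReal.comp (kIterM_meas hk (m+1))
    refine (Measure.ae_prod_iff_ae_ae ?_).mpr ?_
    · exact StronglyMeasurable.measurableSet_eq_fun hmeas1.stronglyMeasurable
        (lIter_meas hk' (m+1)).stronglyMeasurable
    have h1 : ∀ᵐ x ∂μ, ∀ᵐ z ∂μ, ENNReal.ofReal (kIterM μ k m x z) = lIter μ k' m x z :=
      (Measure.ae_prod_iff_ae_ae (by
        exact StronglyMeasurable.measurableSet_eq_fun
          (ENNReal.measurable_ofReal.comp (kIterM_meas hk m)).stronglyMeasurable
          (lIter_meas hk' m).stronglyMeasurable)).mp ih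
    have h2 : ∀ᵐ x ∂μ, ∫⁻ y, lIter μ k' (m+1) x y ∂μ = 1 := lIter_mass hk' hmar (m+1)
    filter_upwards [h1, h2] with x hx hfin
    have key : ∀ y : A, lIter μ k' (m+1) x y = ∫⁻ z, ENNReal.ofReal (kIterM μ k m x z * k z y) ∂μ := by
      intro y
      refine (lintegral_congr_ae ?_).symm
      filter_upwards [hx] with z hz
      rw [ENNReal.ofReal_mul (kIterM_nonneg hknn m x z), hz]
    have hfin' : ∀ᵐ y ∂μ, lIter μ k' (m+1) x y < ⊤ := by
      refine ae_lt_top ?_ ?_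
      · exact (lIter_meas hk' (m+1)).comp measurable_prodMk_left
      · rw [hfin]; exact ENNReal.one_ne_top
    filter_upwards [hfin'] with y hy
    have hint : Integrable (fun z => kIterM μ k m x z * k z y) μ := by
      constructor
      · exact (((kIterM_meas hk m).comp (measurable_const.prodMk measurable_id)).mul
          (hk.comp (measurable_id.prodMk measurable_const))).stronglyMeasurable.aestronglyMeasurable
      · rw [hasFiniteIntegral_iff_ofReal (Filter.Eventually.of_forall fun z =>
          mul_nonneg (kIterM_nonneg hknn m x z) (hknn z y))]
        rw [← key y]
        exact hy
    have : kIterM μ k (m+1) x y = (lIter μ k' (m+1) x y).toReal := by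
      show (∫ z, kIterM μ k m x z * k z y ∂μ) = _
      rw [integral_eq_lintegral_of_nonneg_ae (Filter.Eventually.of_forall fun z =>
        mul_nonneg (kIterM_nonneg hknn m x z) (hknn z y)) hint.1, key y]
    rw [this, ENNReal.ofReal_toReal hy.ne]; rfl
lemma pushN_meas (hk : Measurable (uncurry k)) (hf : Measurable f) (m : ℕ) :
    Measurable (pushN μ k f m) := by
  induction m with
  | zero => exact hf
  | succ m ih =>
    exact Measurable.lintegral_prod_right'
      (f := fun p : A × A => k p.2 p.1 * pushN μ k f m p.2)
      ((hk.comp (measurable_snd.prodMk measurable_fst)).mul (ih.comp measurable_snd))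

lemma pushN_congr {f' : A → ℝ≥0∞} (h : f =ᵐ[μ] f') (m : ℕ) :
    pushN μ k f m =ᵐ[μ] pushN μ k f' m := by
  induction m with
  | zero => exact h
  | succ m ih =>
    refine Filter.Eventually.of_forall (fun y => ?_)
    exact lintegral_congr_ae (ih.mono fun x hx => by simp only [hx])

lemma pushN_mass (hk : Measurable (uncurry k))
    (hmar : ∀ᵐ x ∂μ, ∫⁻ y, k x y ∂μ = 1) (hf : AEMeasurable f μ)
    (hfm : ∫⁻ x, f x ∂μ = 1) (m : ℕ) : ∫⁻ x, pushN μ k f m x ∂μ = 1 := by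
  induction m with
  | zero => exact hfm
  | succ m ih =>
    have hpm : AEMeasurable (pushN μ k f m) μ := by
      rcases hf with ⟨g, hg, hfg⟩
      exact (pushN_meas hk hg m).aemeasurable.congr (pushN_congr hfg m).symm
    calc ∫⁻ y, ∫⁻ x, k x y * pushN μ k f m x ∂μ ∂μ
        = ∫⁻ x, ∫⁻ y, k x y * pushN μ k f m x ∂μ ∂μ := by
          refine (lintegral_lintegral_swap ?_).symm
          exact hk.aemeasurable.mul
            (hpm.comp_quasiMeasurePreserving Measure.quasiMeasurePreserving_fst)
      _ = ∫⁻ x, (∫⁻ y, k x y ∂μ) * pushN μ k f m x ∂μ :=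
          lintegral_congr fun x =>
            lintegral_mul_const'' _ (hk.comp measurable_prodMk_left).aemeasurable
      _ = ∫⁻ x, pushN μ k f m x ∂μ := by
          refine lintegral_congr_ae ?_
          filter_upwards [hmar] with x hx
          rw [hx, one_mul]
      _ = 1 := ih

lemma push_lIter (hk : Measurable (uncurry k)) (hf : Measurable f) (m : ℕ) (y : A) :
    ∫⁻ x, lIter μ k m x y * f x ∂μ = pushN μ k f (m + 1) y := by
  induction m generalizing y with
  | zero =>
    show ∫⁻ x, k x y * f x ∂μ = ∫⁻ x, k x y * f x ∂μ
    rfl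
  | succ m ih =>
    calc ∫⁻ x, (∫⁻ z, lIter μ k m x z * k z y ∂μ) * f x ∂μ
        = ∫⁻ x, ∫⁻ z, lIter μ k m x z * k z y * f x ∂μ ∂μ :=
          lintegral_congr fun x => by
            rw [lintegral_mul_const'' _]
            exact (((lIter_meas hk m).comp (measurable_const.prodMk measurable_id)).mul
              (hk.comp (measurable_id.prodMk measurable_const))).aemeasurable
      _ = ∫⁻ z, ∫⁻ x, lIter μ k m x z * k z y * f x ∂μ ∂μ := by
          refine lintegral_lintegral_swap ?_
          exact ((((lIter_meas hk m).comp (measurable_fst.prodMk measurable_snd)).mul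
            (hk.comp (measurable_snd.prodMk measurable_const))).mul
            (hf.comp measurable_fst)).aemeasurable
      _ = ∫⁻ z, k z y * ∫⁻ x, lIter μ k m x z * f x ∂μ ∂μ := by
          refine lintegral_congr fun z => ?_
          rw [← lintegral_const_mul'' _]
          · refine lintegral_congr fun x => by ring
          · exact (((lIter_meas hk m).comp (measurable_id.prodMk measurable_const)).mul
              hf).aemeasurable
      _ = ∫⁻ z, k z y * pushN μ k f (m + 1) z ∂μ :=
          lintegral_congr fun z => by rw [ih z]
      _ = pushN μ k f (m + 2) y := rfl


lemma ofReal_push {k : A → A → ℝ} (hk : Measurable (uncurry k)) (hknn : ∀ x y, 0 ≤ k x y)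
    {K : A → A → ℝ≥0∞} (hKm : Measurable (uncurry K))
    (hKk : (fun p : A × A => ENNReal.ofReal (k p.1 p.2)) =ᵐ[μ.prod μ] uncurry K)
    (hmarK : ∀ᵐ x ∂μ, ∫⁻ y, K x y ∂μ = 1)
    {g : A → ℝ} (hg : Measurable g) (hgnn : ∀ x, 0 ≤ g x)
    (hgm : ∫⁻ x, ENNReal.ofReal (g x) ∂μ = 1) (m : ℕ) :
    ∀ᵐ y ∂μ, ENNReal.ofReal (∫ x, kIterM μ k m x y * g x ∂μ)
      = pushN μ K (fun x => ENNReal.ofReal (g x)) (m + 1) y := by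
  set k' : A → A → ℝ≥0∞ := fun x y => ENNReal.ofReal (k x y) with hk'def
  have hk'm : Measurable (uncurry k') := ENNReal.measurable_ofReal.comp hk
  have hmeqKK : MeasurableSet {p : A × A | k' p.1 p.2 = K p.1 p.2} :=
    StronglyMeasurable.measurableSet_eq_fun hk'm.stronglyMeasurable hKm.stronglyMeasurable
  have hmar' : ∀ᵐ x ∂μ, ∫⁻ y, k' x y ∂μ = 1 := by
    have h1 : ∀ᵐ x ∂μ, ∀ᵐ y ∂μ, k' x y = K x y := (Measure.ae_prod_iff_ae_ae hmeqKK).mp hKk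
    filter_upwards [h1, hmarK] with x hx hmx
    rw [lintegral_congr_ae hx, hmx]
  have h3 : (fun p : A × A => ENNReal.ofReal (kIterM μ k m p.1 p.2))
      =ᵐ[μ.prod μ] uncurry (lIter μ K m) :=
    (ofReal_kIterM hk hknn hmar' m).trans (lIter_congr hk'm hKm hKk m)
  have hmeq3 : MeasurableSet {p : A × A |
      ENNReal.ofReal (kIterM μ k m p.1 p.2) = lIter μ K m p.1 p.2} :=
    StronglyMeasurable.measurableSet_eq_fun
      ((ENNReal.measurable_ofReal.comp (kIterM_meas hk m)).stronglyMeasurable)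
      (lIter_meas hKm m).stronglyMeasurable
  have hyx : ∀ᵐ y ∂μ, ∀ᵐ x ∂μ, ENNReal.ofReal (kIterM μ k m x y) = lIter μ K m x y :=
    (Measure.ae_ae_comm hmeq3).mp ((Measure.ae_prod_iff_ae_ae hmeq3).mp h3)
  set g' : A → ℝ≥0∞ := fun x => ENNReal.ofReal (g x) with hg'def
  have hg' : Measurable g' := ENNReal.measurable_ofReal.comp hg
  have hmass : ∫⁻ y, pushN μ K g' (m + 1) y ∂μ = 1 :=
    pushN_mass hKm hmarK hg'.aemeasurable hgm (m + 1)
  have hfin : ∀ᵐ y ∂μ, pushN μ K g' (m + 1) y < ⊤ :=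
    ae_lt_top (pushN_meas hKm hg' (m + 1)) (by rw [hmass]; exact ENNReal.one_ne_top)
  filter_upwards [hyx, hfin] with y hy hfiny
  have hintmeas : Measurable fun x => kIterM μ k m x y * g x :=
    ((kIterM_meas hk m).comp (measurable_id.prodMk measurable_const)).mul hg
  have heq : (∫ x, kIterM μ k m x y * g x ∂μ) = (pushN μ K g' (m + 1) y).toReal := by
    rw [integral_eq_lintegral_of_nonneg_ae (Filter.Eventually.of_forall fun x =>
      mul_nonneg (kIterM_nonneg hknn m x y) (hgnn x)) hintmeas.aestronglyMeasurable]
    congr 1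
    rw [← push_lIter hKm hg' m y]
    refine lintegral_congr_ae ?_
    filter_upwards [hy] with x hx
    rw [ENNReal.ofReal_mul (kIterM_nonneg hknn m x y), hx]
  rw [heq, ENNReal.ofReal_toReal hfiny.ne]

section Cross
variable {B : Type*} [MeasurableSpace B] {η : Measure B} [SFinite η]
  {S : A → B → ℝ≥0∞} {H : B → A → ℝ≥0∞}

lemma cross (hS : Measurable (uncurry S)) (hH : Measurable (uncurry H)) (hf : Measurable f)
    (m : ℕ) (y : A) :
    pushN μ (fun x y => ∫⁻ γ, S y γ * H γ x ∂η) f (m + 1) y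
      = ∫⁻ γ, S y γ * pushN η (fun γ γ' => ∫⁻ x, H γ' x * S x γ ∂μ)
          (fun γ => ∫⁻ x, H γ x * f x ∂μ) m γ ∂η := by
  set K : A → A → ℝ≥0∞ := fun x y => ∫⁻ γ, S y γ * H γ x ∂η with hKdef
  set Kt : B → B → ℝ≥0∞ := fun γ γ' => ∫⁻ x, H γ' x * S x γ ∂μ with hKtdef
  set ft : B → ℝ≥0∞ := fun γ => ∫⁻ x, H γ x * f x ∂μ with hftdef
  have hK : Measurable (uncurry K) :=
    Measurable.lintegral_prod_right'
      (f := fun p : (A × A) × B => S p.1.2 p.2 * H p.2 p.1.1)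
      ((hS.comp (measurable_fst.snd.prodMk measurable_snd)).mul
        (hH.comp (measurable_snd.prodMk measurable_fst.fst)))
  have hKt : Measurable (uncurry Kt) :=
    Measurable.lintegral_prod_right'
      (f := fun p : (B × B) × A => H p.1.2 p.2 * S p.2 p.1.1)
      ((hH.comp (measurable_fst.snd.prodMk measurable_snd)).mul
        (hS.comp (measurable_snd.prodMk measurable_fst.fst)))
  have hft : Measurable ft :=
    Measurable.lintegral_prod_right'
      (f := fun p : B × A => H p.1 p.2 * f p.2)
      (hH.mul (hf.comp measurable_snd))
  induction m generalizing y with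
  | zero =>
    show ∫⁻ x, K x y * f x ∂μ = ∫⁻ γ, S y γ * ft γ ∂η
    calc ∫⁻ x, K x y * f x ∂μ
        = ∫⁻ x, ∫⁻ γ, S y γ * H γ x * f x ∂η ∂μ := by
          exact lintegral_congr fun x => (lintegral_mul_const'' (f x)
            ((hS.comp (measurable_const.prodMk measurable_id)).mul
             (hH.comp (measurable_id.prodMk measurable_const))).aemeasurable).symm
      _ = ∫⁻ γ, ∫⁻ x, S y γ * H γ x * f x ∂μ ∂η := by
          refine lintegral_lintegral_swap ?_
          exact (((hS.comp (measurable_const.prodMk measurable_snd)).mul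
            (hH.comp (measurable_snd.prodMk measurable_fst))).mul
            (hf.comp measurable_fst)).aemeasurable
      _ = ∫⁻ γ, S y γ * ft γ ∂η := by
          refine lintegral_congr fun γ => ?_
          simp only [mul_assoc]
          exact lintegral_const_mul'' _ ((hH.comp (measurable_const.prodMk measurable_id)).mul hf).aemeasurable
  | succ m ih =>
    have hP : Measurable (pushN μ K f (m + 1)) := pushN_meas hK hf (m + 1)
    have hQ : Measurable (pushN η Kt ft m) := pushN_meas hKt hft m
    calc pushN μ K f (m + 2) y
        = ∫⁻ x, K x y * pushN μ K f (m + 1) x ∂μ := rfl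
      _ = ∫⁻ x, ∫⁻ γ, S y γ * H γ x * pushN μ K f (m + 1) x ∂η ∂μ := by
          exact lintegral_congr fun x => (lintegral_mul_const'' (pushN μ K f (m+1) x)
            ((hS.comp (measurable_const.prodMk measurable_id)).mul
             (hH.comp (measurable_id.prodMk measurable_const))).aemeasurable).symm
      _ = ∫⁻ γ, ∫⁻ x, S y γ * H γ x * pushN μ K f (m + 1) x ∂μ ∂η := by
          refine lintegral_lintegral_swap ?_
          exact (((hS.comp (measurable_const.prodMk measurable_snd)).mul
            (hH.comp (measurable_snd.prodMk measurable_fst))).mul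
            (hP.comp measurable_fst)).aemeasurable
      _ = ∫⁻ γ, S y γ * ∫⁻ x, H γ x * pushN μ K f (m + 1) x ∂μ ∂η := by
          refine lintegral_congr fun γ => ?_
          simp only [mul_assoc]
          exact lintegral_const_mul'' _ ((hH.comp (measurable_const.prodMk measurable_id)).mul hP).aemeasurable
      _ = ∫⁻ γ, S y γ * pushN η Kt ft (m + 1) γ ∂η := by
          refine lintegral_congr fun γ => ?_
          congr 1
          calc ∫⁻ x, H γ x * pushN μ K f (m + 1) x ∂μ
              = ∫⁻ x, H γ x * ∫⁻ γ', S x γ' * pushN η Kt ft m γ' ∂η ∂μ :=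
                lintegral_congr fun x => by rw [ih x]
            _ = ∫⁻ x, ∫⁻ γ', H γ x * (S x γ' * pushN η Kt ft m γ') ∂η ∂μ := by
                refine lintegral_congr fun x => ?_
                exact (lintegral_const_mul'' _ ((hS.comp (measurable_const.prodMk measurable_id)).mul hQ).aemeasurable).symm
            _ = ∫⁻ γ', ∫⁻ x, H γ x * (S x γ' * pushN η Kt ft m γ') ∂μ ∂η := by
                refine lintegral_lintegral_swap ?_
                exact ((hH.comp (measurable_const.prodMk measurable_fst)).mul
                  ((hS.comp (measurable_fst.prodMk measurable_snd)).mul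
                    (hQ.comp measurable_snd))).aemeasurable
            _ = ∫⁻ γ', Kt γ' γ * pushN η Kt ft m γ' ∂η := by
                refine lintegral_congr fun γ' => ?_
                simp only [← mul_assoc]
                exact lintegral_mul_const'' _ ((hH.comp (measurable_const.prodMk measurable_id)).mul
                  (hS.comp (measurable_id.prodMk measurable_const))).aemeasurable
            _ = pushN η Kt ft (m + 1) γ := rfl

end Cross

lemma lint_one {α : Type*} [MeasurableSpace α] (ρ : Measure α) (f : α → ℝ)
    (hnn : 0 ≤ᵐ[ρ] f) (hm : AEStronglyMeasurable f ρ) (h1 : (∫ a, f a ∂ρ) = 1) :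
    ∫⁻ a, ENNReal.ofReal (f a) ∂ρ = 1 := by
  rw [integral_eq_lintegral_of_nonneg_ae hnn hm] at h1
  exact (ENNReal.toReal_eq_one_iff _).mp h1

end TVAux


set_option maxHeartbeats 2000000 in
/-- total variation bounds for a chain in terms of bounds for the
flipped chain.  Here `stil x γ` denotes s̃(x|γ), `htil γ x` denotes h̃(γ|x),
k(x,x') = ∫_Y s̃(x'|γ) h̃(γ|x) dγ, k̃(γ,γ') = ∫_X h̃(γ'|x) s̃(x|γ) dx,
π̃ is a stationary density of k̃ and π(x) = ∫_Y s̃(x|γ) π̃(γ) dγ.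
The hypothesis on the flipped chain is split into the case m = 0 (where the
0-step kernel is the identity) and m ≥ 1. -/
theorem tv_bound_from_flipped_chain
    (p q : ℕ) (Xs : Set (Fin p → ℝ)) (Ys : Set (Fin q → ℝ))
    (hXs : MeasurableSet Xs) (hYs : MeasurableSet Ys)
    (stil : (Fin p → ℝ) → (Fin q → ℝ) → ℝ) (htil : (Fin q → ℝ) → (Fin p → ℝ) → ℝ)
    (hsmeas : Measurable (Function.uncurry stil))
    (hhmeas : Measurable (Function.uncurry htil))
    (hsnn : ∀ x γ, 0 ≤ stil x γ) (hhnn : ∀ γ x, 0 ≤ htil γ x)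
    (hsint : ∀ γ ∈ Ys, (∫ x in Xs, stil x γ) = 1)
    (hhint : ∀ x ∈ Xs, (∫ γ in Ys, htil γ x) = 1)
    (pitil : (Fin q → ℝ) → ℝ) (hpitnn : ∀ γ, 0 ≤ pitil γ)
    (hpitint : (∫ γ in Ys, pitil γ) = 1)
    (hstat : ∀ γ' ∈ Ys,
      (∫ γ in Ys, (∫ x in Xs, htil γ' x * stil x γ) * pitil γ) = pitil γ')
    (R : (Fin q → ℝ) → ℕ → ℝ) (hRpos : ∀ γ m, 0 < R γ m)
    (hflip0 : ∀ νt : (Fin q → ℝ) → ℝ, (∀ γ, 0 ≤ νt γ) → (∫ γ in Ys, νt γ) = 1 →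
      (∫ γ' in Ys, |νt γ' - pitil γ'|) ≤ ∫ γ in Ys, R γ 0 * νt γ)
    (hflip : ∀ νt : (Fin q → ℝ) → ℝ, (∀ γ, 0 ≤ νt γ) → (∫ γ in Ys, νt γ) = 1 →
      ∀ m : ℕ,
      (∫ γ' in Ys,
          |(∫ γ in Ys,
              kIterM (volume.restrict Ys)
                (fun γ γ' => ∫ x in Xs, htil γ' x * stil x γ) m γ γ' * νt γ)
            - pitil γ'|)
        ≤ ∫ γ in Ys, R γ (m + 1) * νt γ) :
    ∀ ν : (Fin p → ℝ) → ℝ, (∀ x, 0 ≤ ν x) → (∫ x in Xs, ν x) = 1 →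
      ∀ m : ℕ,
      (∫ x' in Xs,
          |(∫ x in Xs,
              kIterM (volume.restrict Xs)
                (fun x x' => ∫ γ in Ys, stil x' γ * htil γ x) m x x' * ν x)
            - (∫ γ in Ys, stil x' γ * pitil γ)|)
        ≤ ∫ x in Xs, (∫ γ in Ys, R γ m * htil γ x) * ν x := by
  intro ν hνnn hν1 m
  clear hstat
  set μ : Measure (Fin p → ℝ) := volume.restrict Xs with hμdef
  set η : Measure (Fin q → ℝ) := volume.restrict Ys with hηdef
  set kX : (Fin p → ℝ) → (Fin p → ℝ) → ℝ := fun x x' => ∫ γ, stil x' γ * htil γ x ∂η with hkXdef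
  set kY : (Fin q → ℝ) → (Fin q → ℝ) → ℝ := fun γ γ' => ∫ x, htil γ' x * stil x γ ∂μ with hkYdef
  have hXae : ∀ᵐ x ∂μ, x ∈ Xs := ae_restrict_mem hXs
  have hYae : ∀ᵐ γ ∂η, γ ∈ Ys := ae_restrict_mem hYs
  -- measurable nonneg representative of ν
  have hνint : Integrable ν μ := by
    by_contra h
    rw [integral_undef h] at hν1
    norm_num at hν1
  set ν₀ : (Fin p → ℝ) → ℝ := fun x => max (hνint.1.mk ν x) 0 with hν₀def
  have hν₀meas : Measurable ν₀ :=
    hνint.1.stronglyMeasurable_mk.measurable.max measurable_const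
  have hνν₀ : ν =ᵐ[μ] ν₀ := by
    filter_upwards [hνint.1.ae_eq_mk] with x hx
    rw [hν₀def]; simp only [← hx, max_eq_left (hνnn x)]
  have hν₀nn : ∀ x, 0 ≤ ν₀ x := fun x => le_max_right _ _
  have hν₀1 : ∫ x, ν₀ x ∂μ = 1 := by rw [← integral_congr_ae hνν₀]; exact hν1
  -- measurable nonneg representative of pitil
  have hπint : Integrable pitil η := by
    by_contra h
    rw [integral_undef h] at hpitint
    norm_num at hpitint
  set π₀ : (Fin q → ℝ) → ℝ := fun γ => max (hπint.1.mk pitil γ) 0 with hπ₀def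
  have hπ₀meas : Measurable π₀ :=
    hπint.1.stronglyMeasurable_mk.measurable.max measurable_const
  have hππ₀ : pitil =ᵐ[η] π₀ := by
    filter_upwards [hπint.1.ae_eq_mk] with γ hγ
    rw [hπ₀def]; simp only [← hγ, max_eq_left (hpitnn γ)]
  have hπ₀nn : ∀ γ, 0 ≤ π₀ γ := fun γ => le_max_right _ _
  have hπ₀1 : ∫ γ, π₀ γ ∂η = 1 := by rw [← integral_congr_ae hππ₀]; exact hpitint
  have hπ₀int : Integrable π₀ η := hπint.congr hππ₀
  -- ENNReal versions
  set s' : (Fin p → ℝ) → (Fin q → ℝ) → ℝ≥0∞ := fun x γ => ENNReal.ofReal (stil x γ) with hs'def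
  set h' : (Fin q → ℝ) → (Fin p → ℝ) → ℝ≥0∞ := fun γ x => ENNReal.ofReal (htil γ x) with hh'def
  set ν' : (Fin p → ℝ) → ℝ≥0∞ := fun x => ENNReal.ofReal (ν₀ x) with hν'def
  set p' : (Fin q → ℝ) → ℝ≥0∞ := fun γ => ENNReal.ofReal (π₀ γ) with hp'def
  have hs'meas : Measurable (Function.uncurry s') := ENNReal.measurable_ofReal.comp hsmeas
  have hh'meas : Measurable (Function.uncurry h') := ENNReal.measurable_ofReal.comp hhmeas
  have hν'meas : Measurable ν' := ENNReal.measurable_ofReal.comp hν₀meas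
  have hp'meas : Measurable p' := ENNReal.measurable_ofReal.comp hπ₀meas
  -- lintegral normalizations
  have hν'1 : ∫⁻ x, ν' x ∂μ = 1 := by
    have h2 := TVAux.lint_one μ ν₀ (Filter.Eventually.of_forall hν₀nn) hν₀meas.aestronglyMeasurable hν₀1
    exact h2
  have hp'1 : ∫⁻ γ, p' γ ∂η = 1 := by
    have h2 := TVAux.lint_one η π₀ (Filter.Eventually.of_forall hπ₀nn) hπ₀meas.aestronglyMeasurable hπ₀1
    exact h2
  have hs1 : ∀ᵐ γ ∂η, ∫⁻ x, s' x γ ∂μ = 1 := by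
    filter_upwards [hYae] with γ hγ
    have h2 := TVAux.lint_one μ (fun x => stil x γ) (Filter.Eventually.of_forall fun x => hsnn x γ)
      (hsmeas.comp (measurable_id.prodMk measurable_const)).aestronglyMeasurable (hsint γ hγ)
    exact h2
  have hh1 : ∀ᵐ x ∂μ, ∫⁻ γ, h' γ x ∂η = 1 := by
    filter_upwards [hXae] with x hx
    have h2 := TVAux.lint_one η (fun γ => htil γ x) (Filter.Eventually.of_forall fun γ => hhnn γ x)
      (hhmeas.comp (measurable_id.prodMk measurable_const)).aestronglyMeasurable (hhint x hx)
    exact h2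
  -- ENNReal kernels
  set K' : (Fin p → ℝ) → (Fin p → ℝ) → ℝ≥0∞ := fun x y => ∫⁻ γ, s' y γ * h' γ x ∂η with hK'def
  set Kt' : (Fin q → ℝ) → (Fin q → ℝ) → ℝ≥0∞ := fun γ γ' => ∫⁻ x, h' γ' x * s' x γ ∂μ with hKt'def
  have hK'meas : Measurable (Function.uncurry K') :=
    Measurable.lintegral_prod_right'
      (f := fun pr : ((Fin p → ℝ) × (Fin p → ℝ)) × (Fin q → ℝ) => s' pr.1.2 pr.2 * h' pr.2 pr.1.1)
      ((hs'meas.comp (measurable_fst.snd.prodMk measurable_snd)).mul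
        (hh'meas.comp (measurable_snd.prodMk measurable_fst.fst)))
  have hKt'meas : Measurable (Function.uncurry Kt') :=
    Measurable.lintegral_prod_right'
      (f := fun pr : ((Fin q → ℝ) × (Fin q → ℝ)) × (Fin p → ℝ) => h' pr.1.2 pr.2 * s' pr.2 pr.1.1)
      ((hh'meas.comp (measurable_fst.snd.prodMk measurable_snd)).mul
        (hs'meas.comp (measurable_snd.prodMk measurable_fst.fst)))
  have hKmar : ∀ᵐ x ∂μ, ∫⁻ y, K' x y ∂μ = 1 := by
    filter_upwards [hh1] with x hx
    calc ∫⁻ y, ∫⁻ γ, s' y γ * h' γ x ∂η ∂μ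
        = ∫⁻ γ, ∫⁻ y, s' y γ * h' γ x ∂μ ∂η := by
          refine lintegral_lintegral_swap ?_
          exact ((hs'meas.comp (measurable_fst.prodMk measurable_snd)).mul
            (hh'meas.comp (measurable_snd.prodMk measurable_const))).aemeasurable
      _ = ∫⁻ γ, (∫⁻ y, s' y γ ∂μ) * h' γ x ∂η :=
          lintegral_congr fun γ => lintegral_mul_const'' _
            (hs'meas.comp (measurable_id.prodMk measurable_const)).aemeasurable
      _ = ∫⁻ γ, h' γ x ∂η := by
          refine lintegral_congr_ae ?_
          filter_upwards [hs1] with γ hγ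
          rw [hγ, one_mul]
      _ = 1 := hx
  have hKtmar : ∀ᵐ γ ∂η, ∫⁻ γ', Kt' γ γ' ∂η = 1 := by
    filter_upwards [hs1] with γ hγ
    calc ∫⁻ γ', ∫⁻ x, h' γ' x * s' x γ ∂μ ∂η
        = ∫⁻ x, ∫⁻ γ', h' γ' x * s' x γ ∂η ∂μ := by
          refine lintegral_lintegral_swap ?_
          exact ((hh'meas.comp (measurable_fst.prodMk measurable_snd)).mul
            (hs'meas.comp (measurable_snd.prodMk measurable_const))).aemeasurable
      _ = ∫⁻ x, (∫⁻ γ', h' γ' x ∂η) * s' x γ ∂μ :=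
          lintegral_congr fun x => lintegral_mul_const'' _
            (hh'meas.comp (measurable_id.prodMk measurable_const)).aemeasurable
      _ = ∫⁻ x, s' x γ ∂μ := by
          refine lintegral_congr_ae ?_
          filter_upwards [hh1] with x hx
          rw [hx, one_mul]
      _ = 1 := hγ

  -- real kernels vs ENNReal kernels
  have hkX_toReal : ∀ x y, kX x y = (K' x y).toReal := by
    intro x y
    rw [hkXdef]
    simp only
    rw [integral_eq_lintegral_of_nonneg_ae
      (Filter.Eventually.of_forall fun γ => mul_nonneg (hsnn y γ) (hhnn γ x))
      ((hsmeas.comp (measurable_const.prodMk measurable_id)).mul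
        (hhmeas.comp (measurable_id.prodMk measurable_const))).aestronglyMeasurable]
    congr 1
    exact lintegral_congr fun γ => ENNReal.ofReal_mul (hsnn y γ)
  have hkY_toReal : ∀ γ γ', kY γ γ' = (Kt' γ γ').toReal := by
    intro γ γ'
    rw [hkYdef]
    simp only
    rw [integral_eq_lintegral_of_nonneg_ae
      (Filter.Eventually.of_forall fun x => mul_nonneg (hhnn γ' x) (hsnn x γ))
      ((hhmeas.comp (measurable_const.prodMk measurable_id)).mul
        (hsmeas.comp (measurable_id.prodMk measurable_const))).aestronglyMeasurable]
    congr 1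
    exact lintegral_congr fun x => ENNReal.ofReal_mul (hhnn γ' x)
  have hkXnn : ∀ x y, 0 ≤ kX x y := fun x y => ENNReal.toReal_nonneg.trans_eq (hkX_toReal x y).symm
  have hkYnn : ∀ γ γ', 0 ≤ kY γ γ' := fun γ γ' => ENNReal.toReal_nonneg.trans_eq (hkY_toReal γ γ').symm
  have hkXmeas : Measurable (Function.uncurry kX) := by
    have : Function.uncurry kX = fun pr : (Fin p → ℝ) × (Fin p → ℝ) => (K' pr.1 pr.2).toReal :=
      funext fun pr => hkX_toReal pr.1 pr.2
    rw [this]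
    exact hK'meas.ennreal_toReal
  have hkYmeas : Measurable (Function.uncurry kY) := by
    have : Function.uncurry kY = fun pr : (Fin q → ℝ) × (Fin q → ℝ) => (Kt' pr.1 pr.2).toReal :=
      funext fun pr => hkY_toReal pr.1 pr.2
    rw [this]
    exact hKt'meas.ennreal_toReal
  have hkXK : (fun pr : (Fin p → ℝ) × (Fin p → ℝ) => ENNReal.ofReal (kX pr.1 pr.2)) =ᵐ[μ.prod μ] Function.uncurry K' := by
    refine (Measure.ae_prod_iff_ae_ae ?_).mpr ?_
    · exact StronglyMeasurable.measurableSet_eq_fun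
        ((ENNReal.measurable_ofReal.comp hkXmeas).stronglyMeasurable) hK'meas.stronglyMeasurable
    · filter_upwards [hKmar] with x hx
      have hfin : ∀ᵐ y ∂μ, K' x y < ⊤ :=
        ae_lt_top (hK'meas.comp measurable_prodMk_left) (by rw [hx]; exact ENNReal.one_ne_top)
      filter_upwards [hfin] with y hy
      rw [hkX_toReal x y, ENNReal.ofReal_toReal hy.ne]
      rfl
  have hkYK : (fun pr : (Fin q → ℝ) × (Fin q → ℝ) => ENNReal.ofReal (kY pr.1 pr.2)) =ᵐ[η.prod η] Function.uncurry Kt' := by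
    refine (Measure.ae_prod_iff_ae_ae ?_).mpr ?_
    · exact StronglyMeasurable.measurableSet_eq_fun
        ((ENNReal.measurable_ofReal.comp hkYmeas).stronglyMeasurable) hKt'meas.stronglyMeasurable
    · filter_upwards [hKtmar] with γ hγ
      have hfin : ∀ᵐ γ' ∂η, Kt' γ γ' < ⊤ :=
        ae_lt_top (hKt'meas.comp measurable_prodMk_left) (by rw [hγ]; exact ENNReal.one_ne_top)
      filter_upwards [hfin] with γ' hγ'
      rw [hkY_toReal γ γ', ENNReal.ofReal_toReal hγ'.ne]
      rfl
  -- flipped initial density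
  set νt' : (Fin q → ℝ) → ℝ≥0∞ := fun γ => ∫⁻ x, h' γ x * ν' x ∂μ with hνt'def
  have hνt'meas : Measurable νt' :=
    Measurable.lintegral_prod_right'
      (f := fun pr : (Fin q → ℝ) × (Fin p → ℝ) => h' pr.1 pr.2 * ν' pr.2)
      (hh'meas.mul (hν'meas.comp measurable_snd))
  have hνt'1 : ∫⁻ γ, νt' γ ∂η = 1 := by
    calc ∫⁻ γ, ∫⁻ x, h' γ x * ν' x ∂μ ∂η
        = ∫⁻ x, ∫⁻ γ, h' γ x * ν' x ∂η ∂μ := by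
          refine lintegral_lintegral_swap ?_
          exact (hh'meas.mul (hν'meas.comp measurable_snd)).aemeasurable
      _ = ∫⁻ x, (∫⁻ γ, h' γ x ∂η) * ν' x ∂μ :=
          lintegral_congr fun x => lintegral_mul_const'' _
            (hh'meas.comp (measurable_id.prodMk measurable_const)).aemeasurable
      _ = ∫⁻ x, ν' x ∂μ := by
          refine lintegral_congr_ae ?_
          filter_upwards [hh1] with x hx
          rw [hx, one_mul]
      _ = 1 := hν'1
  have hνt'fin : ∀ᵐ γ ∂η, νt' γ < ⊤ :=
    ae_lt_top hνt'meas (by rw [hνt'1]; exact ENNReal.one_ne_top)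
  set νt : (Fin q → ℝ) → ℝ := fun γ => (νt' γ).toReal with hνtdef
  have hνtmeas : Measurable νt := hνt'meas.ennreal_toReal
  have hνtnn : ∀ γ, 0 ≤ νt γ := fun γ => ENNReal.toReal_nonneg
  have hνt_of : (fun γ => ENNReal.ofReal (νt γ)) =ᵐ[η] νt' := by
    filter_upwards [hνt'fin] with γ hγ
    rw [hνtdef]; exact ENNReal.ofReal_toReal hγ.ne
  have hνt1 : ∫ γ, νt γ ∂η = 1 := by
    rw [hνtdef]
    simp only
    rw [integral_toReal hνt'meas.aemeasurable hνt'fin, hνt'1]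
    rfl
  have hνt_of1 : ∫⁻ γ, ENNReal.ofReal (νt γ) ∂η = 1 := by
    rw [lintegral_congr_ae hνt_of]; exact hνt'1
  -- pushforward densities on Y side
  set σ : ℕ → (Fin q → ℝ) → ℝ≥0∞ := fun j => TVAux.pushN η Kt' νt' j with hσdef
  have hσmeas : ∀ j, Measurable (σ j) := fun j => TVAux.pushN_meas hKt'meas hνt'meas j
  have hσmass : ∀ j, ∫⁻ γ, σ j γ ∂η = 1 := fun j =>
    TVAux.pushN_mass hKt'meas hKtmar hνt'meas.aemeasurable hνt'1 j
  -- Key identity on X side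
  have key1 : ∀ᵐ y ∂μ, ENNReal.ofReal (∫ x, kIterM μ kX m x y * ν₀ x ∂μ)
      = TVAux.pushN μ K' ν' (m + 1) y :=
    TVAux.ofReal_push hkXmeas hkXnn hK'meas hkXK hKmar hν₀meas hν₀nn hν'1 m
  have key2 : ∀ y, TVAux.pushN μ K' ν' (m + 1) y = ∫⁻ γ, s' y γ * σ m γ ∂η :=
    fun y => TVAux.cross hs'meas hh'meas hν'meas m y
  -- choose u : the m-step flipped density, with TV bound
  obtain ⟨u, humeas, hunn, huσ, hubound⟩ :
      ∃ u : (Fin q → ℝ) → ℝ, Measurable u ∧ (∀ γ, 0 ≤ u γ) ∧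
        ((fun γ => ENNReal.ofReal (u γ)) =ᵐ[η] σ m) ∧
        (∫ γ, |u γ - pitil γ| ∂η) ≤ ∫ γ, R γ m * νt γ ∂η := by
    cases m with
    | zero =>
      exact ⟨νt, hνtmeas, hνtnn, hνt_of, hflip0 νt hνtnn hνt1⟩
    | succ m' =>
      refine ⟨fun γ' => ∫ γ, kIterM η kY m' γ γ' * νt γ ∂η, ?_, ?_, ?_, ?_⟩
      · have hm1 : Measurable fun pr : (Fin q → ℝ) × (Fin q → ℝ) =>
            kIterM η kY m' pr.2 pr.1 * νt pr.2 :=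
          ((TVAux.kIterM_meas hkYmeas m').comp (measurable_snd.prodMk measurable_fst)).mul
            (hνtmeas.comp measurable_snd)
        exact hm1.stronglyMeasurable.integral_prod_right'.measurable
      · exact fun γ' => integral_nonneg fun γ =>
          mul_nonneg (TVAux.kIterM_nonneg hkYnn m' γ γ') (hνtnn γ)
      · have h1 := TVAux.ofReal_push hkYmeas hkYnn hKt'meas hkYK hKtmar hνtmeas hνtnn hνt_of1 m'
        have h2 : TVAux.pushN η Kt' (fun γ => ENNReal.ofReal (νt γ)) (m' + 1) =ᵐ[η] σ (m' + 1) :=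
          TVAux.pushN_congr hνt_of (m' + 1)
        filter_upwards [h1, h2] with γ' hγ'1 hγ'2
        rw [hγ'1, hγ'2]
      · exact hflip νt hνtnn hνt1 m'
  -- integrability of u
  have hu_lint : ∫⁻ γ, ENNReal.ofReal (u γ) ∂η = 1 := by
    rw [lintegral_congr_ae huσ]; exact hσmass m
  have hu_int : Integrable u η := by
    constructor
    · exact humeas.aestronglyMeasurable
    · rw [hasFiniteIntegral_iff_ofReal (Filter.Eventually.of_forall hunn), hu_lint]
      exact ENNReal.one_lt_top
  -- difference density
  set c : (Fin q → ℝ) → ℝ := fun γ => |u γ - π₀ γ| with hcdef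
  have hcmeas : Measurable c := (humeas.sub hπ₀meas).abs
  have hcnn : ∀ γ, 0 ≤ c γ := fun γ => abs_nonneg _
  have hcint : Integrable c η := (hu_int.sub hπ₀int).abs
  set c' : (Fin q → ℝ) → ℝ≥0∞ := fun γ => ENNReal.ofReal (c γ) with hc'def
  have hc'meas : Measurable c' := ENNReal.measurable_ofReal.comp hcmeas
  have hc'lt : ∫⁻ γ, c' γ ∂η < ⊤ := by
    rw [← hasFiniteIntegral_iff_ofReal (Filter.Eventually.of_forall hcnn)]
    exact hcint.2
  have hc'eq : (∫⁻ γ, c' γ ∂η).toReal = ∫ γ, c γ ∂η := by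
    rw [integral_eq_lintegral_of_nonneg_ae (Filter.Eventually.of_forall hcnn)
      hcmeas.aestronglyMeasurable]
  -- the s'-pushforwards
  set Sσ : (Fin p → ℝ) → ℝ≥0∞ := fun y => ∫⁻ γ, s' y γ * σ m γ ∂η with hSσdef
  set Sp : (Fin p → ℝ) → ℝ≥0∞ := fun y => ∫⁻ γ, s' y γ * p' γ ∂η with hSpdef
  set Sc : (Fin p → ℝ) → ℝ≥0∞ := fun y => ∫⁻ γ, s' y γ * c' γ ∂η with hScdef
  have hSmeas : ∀ (g : (Fin q → ℝ) → ℝ≥0∞), Measurable g →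
      Measurable (fun y => ∫⁻ γ, s' y γ * g γ ∂η) := fun g hg =>
    Measurable.lintegral_prod_right'
      (f := fun pr : (Fin p → ℝ) × (Fin q → ℝ) => s' pr.1 pr.2 * g pr.2)
      (hs'meas.mul (hg.comp measurable_snd))
  have hSmass : ∀ (g : (Fin q → ℝ) → ℝ≥0∞), Measurable g →
      ∫⁻ y, (∫⁻ γ, s' y γ * g γ ∂η) ∂μ = ∫⁻ γ, g γ ∂η := by
    intro g hg
    calc ∫⁻ y, ∫⁻ γ, s' y γ * g γ ∂η ∂μ
        = ∫⁻ γ, ∫⁻ y, s' y γ * g γ ∂μ ∂η := by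
          refine lintegral_lintegral_swap ?_
          exact (hs'meas.mul (hg.comp measurable_snd)).aemeasurable
      _ = ∫⁻ γ, (∫⁻ y, s' y γ ∂μ) * g γ ∂η :=
          lintegral_congr fun γ => lintegral_mul_const'' _
            (hs'meas.comp (measurable_id.prodMk measurable_const)).aemeasurable
      _ = ∫⁻ γ, g γ ∂η := by
          refine lintegral_congr_ae ?_
          filter_upwards [hs1] with γ hγ
          rw [hγ, one_mul]
  have hSσfin : ∀ᵐ y ∂μ, Sσ y < ⊤ :=
    ae_lt_top (hSmeas _ (hσmeas m)) (by rw [hSmass _ (hσmeas m), hσmass m]; exact ENNReal.one_ne_top)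
  have hSpfin : ∀ᵐ y ∂μ, Sp y < ⊤ :=
    ae_lt_top (hSmeas _ hp'meas) (by rw [hSmass _ hp'meas, hp'1]; exact ENNReal.one_ne_top)
  have hScfin : ∀ᵐ y ∂μ, Sc y < ⊤ :=
    ae_lt_top (hSmeas _ hc'meas) (by rw [hSmass _ hc'meas]; exact hc'lt.ne)
  -- the real pushforwards
  set Aν : (Fin p → ℝ) → ℝ := fun y => ∫ x, kIterM μ kX m x y * ν₀ x ∂μ with hAνdef
  have hAνmeas : Measurable Aν := by
    have hm1 : Measurable fun pr : (Fin p → ℝ) × (Fin p → ℝ) =>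
        kIterM μ kX m pr.2 pr.1 * ν₀ pr.2 :=
      ((TVAux.kIterM_meas hkXmeas m).comp (measurable_snd.prodMk measurable_fst)).mul
        (hν₀meas.comp measurable_snd)
    exact hm1.stronglyMeasurable.integral_prod_right'.measurable
  have hAνnn : ∀ y, 0 ≤ Aν y := fun y => integral_nonneg fun x =>
    mul_nonneg (TVAux.kIterM_nonneg hkXnn m x y) (hν₀nn x)
  set P : (Fin p → ℝ) → ℝ := fun y => ∫ γ, stil y γ * π₀ γ ∂η with hPdef
  have hP_toReal : ∀ y, P y = (Sp y).toReal := by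
    intro y
    rw [hPdef]
    simp only
    rw [integral_eq_lintegral_of_nonneg_ae
      (Filter.Eventually.of_forall fun γ => mul_nonneg (hsnn y γ) (hπ₀nn γ))
      ((hsmeas.comp (measurable_const.prodMk measurable_id)).mul hπ₀meas).aestronglyMeasurable]
    congr 1
    exact lintegral_congr fun γ => ENNReal.ofReal_mul (hsnn y γ)
  have hPmeas : Measurable P := by
    have : P = fun y => (Sp y).toReal := funext hP_toReal
    rw [this]; exact (hSmeas _ hp'meas).ennreal_toReal
  -- pointwise a.e. bound
  have hptw : ∀ᵐ y ∂μ, ENNReal.ofReal (|Aν y - P y|) ≤ Sc y := by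
    filter_upwards [key1, hSσfin, hSpfin, hScfin] with y h1 h2 h3 h4
    have hAσ : ENNReal.ofReal (Aν y) = Sσ y := by rw [h1, key2 y]
    have hA : Aν y = (Sσ y).toReal := by
      rw [← hAσ, ENNReal.toReal_ofReal (hAνnn y)]
    have hSσu : Sσ y = ∫⁻ γ, s' y γ * ENNReal.ofReal (u γ) ∂η := by
      refine lintegral_congr_ae ?_
      filter_upwards [huσ] with γ hγ
      rw [hγ]
    have hub : ∀ γ, ENNReal.ofReal (u γ) ≤ p' γ + c' γ := by
      intro γ
      rw [hp'def, hc'def]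
      simp only
      rw [← ENNReal.ofReal_add (hπ₀nn γ) (hcnn γ)]
      exact ENNReal.ofReal_le_ofReal (by rw [hcdef]; simp only; nlinarith [abs_sub_abs_le_abs_sub (u γ) (π₀ γ), le_abs_self (u γ - π₀ γ)])
    have hpb : ∀ γ, p' γ ≤ ENNReal.ofReal (u γ) + c' γ := by
      intro γ
      rw [hp'def, hc'def]
      simp only
      rw [← ENNReal.ofReal_add (hunn γ) (hcnn γ)]
      exact ENNReal.ofReal_le_ofReal (by rw [hcdef]; simp only; nlinarith [neg_abs_le (u γ - π₀ γ)])
    have hineq1 : Sσ y ≤ Sp y + Sc y := by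
      rw [hSσu]
      calc ∫⁻ γ, s' y γ * ENNReal.ofReal (u γ) ∂η
          ≤ ∫⁻ γ, s' y γ * p' γ + s' y γ * c' γ ∂η := by
            refine lintegral_mono fun γ => ?_
            rw [← mul_add]
            exact mul_le_mul' le_rfl (hub γ)
        _ = Sp y + Sc y :=
            lintegral_add_left ((hs'meas.comp (measurable_const.prodMk measurable_id)).mul hp'meas) _
    have hineq2 : Sp y ≤ Sσ y + Sc y := by
      rw [hSσu]
      calc Sp y
          ≤ ∫⁻ γ, s' y γ * ENNReal.ofReal (u γ) + s' y γ * c' γ ∂η := by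
            refine lintegral_mono fun γ => ?_
            rw [← mul_add]
            exact mul_le_mul' le_rfl (hpb γ)
        _ = _ :=
            lintegral_add_left ((hs'meas.comp (measurable_const.prodMk measurable_id)).mul
              (ENNReal.measurable_ofReal.comp humeas)) _
    have habs : |Aν y - P y| ≤ (Sc y).toReal := by
      rw [hA, hP_toReal y, abs_sub_le_iff]
      constructor
      · have := ENNReal.toReal_mono (by simp [h3.ne, h4.ne]) hineq1
        rw [ENNReal.toReal_add h3.ne h4.ne] at this
        linarith
      · have := ENNReal.toReal_mono (by simp [h2.ne, h4.ne]) hineq2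
        rw [ENNReal.toReal_add h2.ne h4.ne] at this
        linarith
    calc ENNReal.ofReal (|Aν y - P y|) ≤ ENNReal.ofReal ((Sc y).toReal) :=
          ENNReal.ofReal_le_ofReal habs
      _ = Sc y := ENNReal.ofReal_toReal h4.ne
  -- rewrite goal
  have goalL : ∀ x', (∫ x, kIterM μ kX m x x' * ν x ∂μ) = Aν x' := by
    intro x'
    refine integral_congr_ae ?_
    filter_upwards [hνν₀] with x hx
    rw [hx]
  have goalP : ∀ x', (∫ γ, stil x' γ * pitil γ ∂η) = P x' := by
    intro x'
    refine integral_congr_ae ?_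
    filter_upwards [hππ₀] with γ hγ
    rw [hγ]
  have goalR : (∫ x, (∫ γ, R γ m * htil γ x ∂η) * ν x ∂μ)
      = ∫ x, (∫ γ, R γ m * htil γ x ∂η) * ν₀ x ∂μ := by
    refine integral_congr_ae ?_
    filter_upwards [hνν₀] with x hx
    rw [hx]
  rw [goalR]
  simp only [goalL, goalP]
  -- LHS bound by ∫ c
  have hLHS : (∫ y, |Aν y - P y| ∂μ) ≤ ∫ γ, c γ ∂η := by
    rw [integral_eq_lintegral_of_nonneg_ae (f := fun y => |Aν y - P y|)
      (Filter.Eventually.of_forall fun y => abs_nonneg _)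
      (hAνmeas.sub hPmeas).abs.aestronglyMeasurable]
    rw [← hc'eq, ← hSmass _ hc'meas]
    refine ENNReal.toReal_mono ?_ (lintegral_mono_ae hptw)
    rw [hSmass _ hc'meas]
    exact hc'lt.ne
  have hcpitil : (∫ γ, c γ ∂η) = ∫ γ, |u γ - pitil γ| ∂η := by
    refine integral_congr_ae ?_
    filter_upwards [hππ₀] with γ hγ
    rw [hcdef]; simp only [hγ]
  -- final: ∫ R (m) νt ≤ RHS with ν₀
  have hfinal : (∫ γ, R γ m * νt γ ∂η) ≤ ∫ x, (∫ γ, R γ m * htil γ x ∂η) * ν₀ x ∂μ := by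
    have hRHSnn : 0 ≤ ∫ x, (∫ γ, R γ m * htil γ x ∂η) * ν₀ x ∂μ :=
      integral_nonneg fun x => mul_nonneg
        (integral_nonneg fun γ => mul_nonneg (hRpos γ m).le (hhnn γ x)) (hν₀nn x)
    set G : (Fin q → ℝ) → ℝ := fun γ => R γ m * νt γ with hGdef
    have hGnn : ∀ γ, 0 ≤ G γ := fun γ => mul_nonneg (hRpos γ m).le (hνtnn γ)
    by_cases hGint : Integrable G η
    · -- equality case
      set Gb : (Fin q → ℝ) → ℝ := fun γ => max (hGint.1.mk G γ) 0 with hGbdef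
      have hGbmeas : Measurable Gb := hGint.1.stronglyMeasurable_mk.measurable.max measurable_const
      have hGGb : G =ᵐ[η] Gb := by
        filter_upwards [hGint.1.ae_eq_mk] with γ h
        rw [hGbdef]; simp only [← h, max_eq_left (hGnn γ)]
      have hGbnn : ∀ γ, 0 ≤ Gb γ := fun γ => le_max_right _ _
      have hGbint : Integrable Gb η := hGint.congr hGGb
      set c₂ : (Fin q → ℝ) → ℝ := fun γ => if νt γ = 0 then 0 else Gb γ / νt γ with hc₂def
      have hZmeas : MeasurableSet {γ : (Fin q → ℝ) | νt γ = 0} :=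
        hνtmeas (measurableSet_singleton 0)
      have hc₂meas : Measurable c₂ :=
        Measurable.ite hZmeas measurable_const (hGbmeas.div hνtmeas)
      have hc₂nn : ∀ γ, 0 ≤ c₂ γ := by
        intro γ
        rw [hc₂def]
        by_cases hz : νt γ = 0 <;> simp [hz, div_nonneg (hGbnn γ) (hνtnn γ)]
      have hc₂νt : (fun γ => c₂ γ * νt γ) =ᵐ[η] Gb := by
        filter_upwards [hGGb] with γ h
        by_cases hz : νt γ = 0
        · rw [hc₂def]; simp only [hz, if_true, zero_mul]
          rw [← h, hGdef]; simp [hz]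
        · rw [hc₂def]; simp only [hz, if_false]
          rw [div_mul_cancel₀ _ hz]
      have hzero1 : ∀ᵐ γ ∂(η.restrict {γ | νt γ = 0}), ∀ᵐ x ∂μ, htil γ x * ν₀ x = 0 := by
        have hres : ∀ᵐ γ ∂(η.restrict {γ | νt γ = 0}), νt' γ < ⊤ := ae_restrict_of_ae hνt'fin
        filter_upwards [hres, ae_restrict_mem hZmeas] with γ hfin hmem
        have h0 : νt' γ = 0 := by
          have h1 : (νt' γ).toReal = 0 := hmem
          exact ((ENNReal.toReal_eq_zero_iff _).mp h1).resolve_right hfin.ne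
        have h0' : ∫⁻ x, h' γ x * ν' x ∂μ = 0 := h0
        have h2 := (lintegral_eq_zero_iff
          ((hh'meas.comp (measurable_const.prodMk measurable_id)).mul hν'meas)).mp h0'
        filter_upwards [h2] with x hx
        have h3 : ENNReal.ofReal (htil γ x * ν₀ x) = 0 := by
          rw [ENNReal.ofReal_mul (hhnn γ x)]; exact hx
        exact le_antisymm (ENNReal.ofReal_eq_zero.mp h3) (mul_nonneg (hhnn γ x) (hν₀nn x))
      have hpmeas0 : MeasurableSet {pr : (Fin q → ℝ) × (Fin p → ℝ) |
          htil pr.1 pr.2 * ν₀ pr.2 = 0} :=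
        measurableSet_eq_fun (hhmeas.mul (hν₀meas.comp measurable_snd)) measurable_const
      have hzero2 : ∀ᵐ x ∂μ, ∀ᵐ γ ∂(η.restrict {γ | νt γ = 0}), htil γ x * ν₀ x = 0 :=
        (Measure.ae_ae_comm hpmeas0).mp hzero1
      have hcongr2 : ∀ᵐ x ∂μ,
          (∫ γ, R γ m * htil γ x ∂η) * ν₀ x = (∫ γ, c₂ γ * htil γ x ∂η) * ν₀ x := by
        filter_upwards [hzero2] with x hx
        rcases eq_or_ne (ν₀ x) 0 with h0 | h0
        · rw [h0, mul_zero, mul_zero]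
        · congr 1
          refine integral_congr_ae ?_
          have hx' : ∀ᵐ γ ∂η, γ ∈ {γ : (Fin q → ℝ) | νt γ = 0} → htil γ x * ν₀ x = 0 :=
            (ae_restrict_iff' hZmeas).mp hx
          filter_upwards [hx', hGGb] with γ h1 h2
          by_cases hz : νt γ = 0
          · have hh0 : htil γ x = 0 := by
              rcases mul_eq_zero.mp (h1 hz) with h | h
              exacts [h, absurd h h0]
            rw [hh0, mul_zero, hc₂def]
            simp [hz]
          · rw [hc₂def]; simp only [hz, if_false]
            rw [← h2, hGdef]
            simp only
            rw [mul_div_cancel_right₀ _ hz]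
      set c₂' : (Fin q → ℝ) → ℝ≥0∞ := fun γ => ENNReal.ofReal (c₂ γ) with hc₂'def
      have hc₂'meas : Measurable c₂' := ENNReal.measurable_ofReal.comp hc₂meas
      set W : (Fin p → ℝ) → ℝ≥0∞ := fun x => ∫⁻ γ, c₂' γ * h' γ x ∂η with hWdef
      have hWmeas : Measurable W :=
        Measurable.lintegral_prod_right'
          (f := fun pr : (Fin p → ℝ) × (Fin q → ℝ) => c₂' pr.2 * h' pr.2 pr.1)
          ((hc₂'meas.comp measurable_snd).mul
            (hh'meas.comp (measurable_snd.prodMk measurable_fst)))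
      have hT : ∫⁻ x, W x * ν' x ∂μ = ∫⁻ γ, c₂' γ * νt' γ ∂η := by
        calc ∫⁻ x, W x * ν' x ∂μ
            = ∫⁻ x, ∫⁻ γ, c₂' γ * h' γ x * ν' x ∂η ∂μ :=
              lintegral_congr fun x => (lintegral_mul_const'' (ν' x)
                (hc₂'meas.mul
                  (hh'meas.comp (measurable_id.prodMk measurable_const))).aemeasurable).symm
          _ = ∫⁻ γ, ∫⁻ x, c₂' γ * h' γ x * ν' x ∂μ ∂η := by
              refine lintegral_lintegral_swap ?_
              exact (((hc₂'meas.comp measurable_snd).mul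
                (hh'meas.comp (measurable_snd.prodMk measurable_fst))).mul
                (hν'meas.comp measurable_fst)).aemeasurable
          _ = ∫⁻ γ, c₂' γ * νt' γ ∂η := by
              refine lintegral_congr fun γ => ?_
              simp only [mul_assoc]
              exact lintegral_const_mul'' _
                ((hh'meas.comp (measurable_const.prodMk measurable_id)).mul hν'meas).aemeasurable
      have hTGb : ∫⁻ γ, c₂' γ * νt' γ ∂η = ∫⁻ γ, ENNReal.ofReal (Gb γ) ∂η := by
        refine lintegral_congr_ae ?_
        filter_upwards [hνt_of, hc₂νt] with γ h1 h2
        rw [← h1, hc₂'def]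
        simp only
        rw [← ENNReal.ofReal_mul (hc₂nn γ), h2]
      have hGb_lint : ∫⁻ γ, ENNReal.ofReal (Gb γ) ∂η < ⊤ := by
        rw [← hasFiniteIntegral_iff_ofReal (Filter.Eventually.of_forall hGbnn)]
        exact hGbint.2
      have hGb_eq : (∫⁻ γ, ENNReal.ofReal (Gb γ) ∂η).toReal = ∫ γ, Gb γ ∂η :=
        (integral_eq_lintegral_of_nonneg_ae (Filter.Eventually.of_forall hGbnn)
          hGbmeas.aestronglyMeasurable).symm
      have hI : ∫ γ, G γ ∂η = ∫ γ, Gb γ ∂η := integral_congr_ae hGGb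
      have hfinT : ∫⁻ x, W x * ν' x ∂μ < ⊤ := by rw [hT, hTGb]; exact hGb_lint
      have hw_toReal : ∀ x, (∫ γ, c₂ γ * htil γ x ∂η) = (W x).toReal := by
        intro x
        rw [integral_eq_lintegral_of_nonneg_ae
          (Filter.Eventually.of_forall fun γ => mul_nonneg (hc₂nn γ) (hhnn γ x))
          (hc₂meas.mul (hhmeas.comp (measurable_id.prodMk measurable_const))).aestronglyMeasurable]
        congr 1
        refine lintegral_congr fun γ => ?_
        rw [ENNReal.ofReal_mul (hc₂nn γ)]
      have hwmeas : Measurable fun x => (∫ γ, c₂ γ * htil γ x ∂η) * ν₀ x := by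
        have : (fun x => (∫ γ, c₂ γ * htil γ x ∂η) * ν₀ x)
            = fun x => (W x).toReal * ν₀ x := by
          funext x; rw [hw_toReal x]
        rw [this]
        exact hWmeas.ennreal_toReal.mul hν₀meas
      have hRHS1 : ∫ x, (∫ γ, c₂ γ * htil γ x ∂η) * ν₀ x ∂μ
          = (∫⁻ x, W x * ν' x ∂μ).toReal := by
        rw [integral_eq_lintegral_of_nonneg_ae
          (Filter.Eventually.of_forall fun x => mul_nonneg
            (integral_nonneg fun γ => mul_nonneg (hc₂nn γ) (hhnn γ x)) (hν₀nn x))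
          hwmeas.aestronglyMeasurable]
        congr 1
        refine lintegral_congr_ae ?_
        filter_upwards [ae_lt_top (hWmeas.mul hν'meas) hfinT.ne] with x hx
        rcases eq_or_ne (ν₀ x) 0 with h0 | h0
        · rw [h0, mul_zero, ENNReal.ofReal_zero]
          have : ν' x = 0 := by rw [hν'def]; simp [h0]
          rw [this, mul_zero]
        · have hν'0 : ν' x ≠ 0 := by
            rw [hν'def]
            simp only [ne_eq, ENNReal.ofReal_eq_zero, not_le]
            exact lt_of_le_of_ne (hν₀nn x) (Ne.symm h0)
          have hWfin : W x ≠ ⊤ := by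
            intro hW
            rw [Pi.mul_apply, hW, ENNReal.top_mul hν'0] at hx
            exact absurd hx (lt_irrefl _)
          rw [hw_toReal x, ENNReal.ofReal_mul ENNReal.toReal_nonneg,
            ENNReal.ofReal_toReal hWfin]
      refine le_of_eq ?_
      calc ∫ γ, G γ ∂η = (∫⁻ x, W x * ν' x ∂μ).toReal := by
            rw [hI, ← hGb_eq, ← hTGb, ← hT]
        _ = ∫ x, (∫ γ, c₂ γ * htil γ x ∂η) * ν₀ x ∂μ := hRHS1.symm
        _ = ∫ x, (∫ γ, R γ m * htil γ x ∂η) * ν₀ x ∂μ := (integral_congr_ae hcongr2).symm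
    · rw [integral_undef hGint]
      exact hRHSnn
  calc (∫ y, |Aν y - P y| ∂μ) ≤ ∫ γ, c γ ∂η := hLHS
    _ = ∫ γ, |u γ - pitil γ| ∂η := hcpitil
    _ ≤ ∫ γ, R γ m * νt γ ∂η := hubound
    _ ≤ _ := hfinal
end

section
/- The posterior mode B̂ is a fixed point of the mean of Albert and Chib's transition density: ∫_{ℝ^p} β · k_AC(B̂, β) dβ = B̂. -/
open MeasureTheory Matrix Filter Topology

noncomputable section

/-- standard normal pdf -/
def nphi (x : ℝ) : ℝ := (Real.sqrt (2 * Real.pi))⁻¹ * Real.exp (-(x ^ 2) / 2)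

/-- standard normal cdf -/
def nPhi (x : ℝ) : ℝ := ∫ t in Set.Iic x, nphi t

/-- density of TN(θ,1;1) (if b = true) resp. TN(θ,1;0) (if b = false) at z -/
def tn (θ : ℝ) (b : Bool) (z : ℝ) : ℝ :=
  if b then (if 0 < z then nphi (z - θ) / nPhi θ else 0)
  else (if z < 0 then nphi (z - θ) / (1 - nPhi θ) else 0)

/-- p-variate Gaussian density with mean μ and covariance matrix Λ -/
def mvn {p : ℕ} (μ : Fin p → ℝ) (Λ : Matrix (Fin p) (Fin p) ℝ) (x : Fin p → ℝ) : ℝ :=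
  Real.sqrt (((2 * Real.pi) ^ p * Λ.det)⁻¹) *
    Real.exp (-(dotProduct (x - μ) (Λ⁻¹.mulVec (x - μ))) / 2)

/-- squared Euclidean norm -/
def normSq {m : ℕ} (x : Fin m → ℝ) : ℝ := ∑ i, x i ^ 2

/-- Albert and Chib's Markov transition density, with Σ = XᵀX + Q -/
def kAC {n p : ℕ} (X : Matrix (Fin n) (Fin p) ℝ) (Y : Fin n → Bool)
    (v : Fin p → ℝ) (Q : Matrix (Fin p) (Fin p) ℝ) (β β' : Fin p → ℝ) : ℝ :=
  ∫ z : Fin n → ℝ,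
    mvn ((Xᵀ * X + Q)⁻¹.mulVec (Xᵀ.mulVec z + Q.mulVec v)) (Xᵀ * X + Q)⁻¹ β' *
      ∏ i, tn (dotProduct (X i) β) (Y i) (z i)

/-- the defining property of the posterior mode B̂ -/
def IsPosteriorMode {n p : ℕ} (X : Matrix (Fin n) (Fin p) ℝ) (Y : Fin n → Bool)
    (v : Fin p → ℝ) (Q : Matrix (Fin p) (Fin p) ℝ) (Bhat : Fin p → ℝ) : Prop :=
  (∑ i, (if Y i then nphi (dotProduct (X i) Bhat) / nPhi (dotProduct (X i) Bhat)
          else -(nphi (dotProduct (X i) Bhat) / (1 - nPhi (dotProduct (X i) Bhat)))) • X i)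
    - Q.mulVec (Bhat - v) = 0

section OneDim
open Real Set

lemma nphi_pos (x : ℝ) : 0 < nphi x :=
  mul_pos (inv_pos.2 (Real.sqrt_pos.2 (by positivity))) (Real.exp_pos _)

lemma nphi_nonneg (x : ℝ) : 0 ≤ nphi x := (nphi_pos x).le

lemma nphi_even (x : ℝ) : nphi (-x) = nphi x := by simp [nphi]

lemma continuous_nphi : Continuous nphi := by unfold nphi; fun_prop

lemma nphi_eq (x : ℝ) : nphi x = (Real.sqrt (2 * Real.pi))⁻¹ * Real.exp (-(2⁻¹) * x ^ 2) := by
  have h : -(x ^ 2) / 2 = -(2⁻¹) * x ^ 2 := by ring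
  rw [nphi, h]

lemma sqrt_two_pi_pos : 0 < Real.sqrt (2 * Real.pi) := Real.sqrt_pos.2 (by positivity)

lemma integrable_nphi : Integrable nphi := by
  have h := (integrable_exp_neg_mul_sq (by norm_num : (0:ℝ) < 2⁻¹)).const_mul
    (Real.sqrt (2 * Real.pi))⁻¹
  exact h.congr (ae_of_all _ fun x => (nphi_eq x).symm)

lemma integral_nphi : ∫ x, nphi x = 1 := by
  simp_rw [nphi_eq]
  rw [integral_const_mul, integral_gaussian,
    show Real.pi / 2⁻¹ = 2 * Real.pi by ring]
  exact inv_mul_cancel₀ sqrt_two_pi_pos.ne'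

lemma integrable_mul_nphi : Integrable (fun x => x * nphi x) := by
  have h := (integrable_rpow_mul_exp_neg_mul_sq (by norm_num : (0:ℝ) < 2⁻¹)
    (by norm_num : (-1:ℝ) < 1)).const_mul (Real.sqrt (2 * Real.pi))⁻¹
  refine h.congr (ae_of_all _ fun x => ?_)
  simp only [Real.rpow_one, nphi_eq]; ring

lemma integrable_abs_mul_nphi : Integrable (fun x => |x| * nphi x) := by
  refine integrable_mul_nphi.abs.congr (ae_of_all _ fun x => ?_)
  simp only [abs_mul, abs_of_nonneg (nphi_nonneg x)]

lemma integral_mul_nphi : ∫ x, x * nphi x = 0 := by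
  have h := integral_neg_eq_self (fun x => x * nphi x) (volume : Measure ℝ)
  simp_rw [nphi_even, neg_mul] at h
  rw [integral_neg] at h
  linarith

lemma hasDerivAt_neg_nphi (x : ℝ) : HasDerivAt (fun t => -nphi t) (x * nphi x) x := by
  have h1 : HasDerivAt (fun t : ℝ => -(t ^ 2) / 2) (-x) x := by
    have h := (hasDerivAt_pow 2 x).neg.div_const 2
    exact h.congr_deriv (by push_cast; ring)
  have h3 := ((h1.exp).const_mul (Real.sqrt (2 * Real.pi))⁻¹).neg
  simp only [nphi]
  exact h3.congr_deriv (by ring)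

lemma tendsto_nphi_atTop : Tendsto nphi atTop (𝓝 0) := by
  have hsq : Tendsto (fun x : ℝ => x ^ 2 / 2) atTop atTop :=
    (tendsto_pow_atTop (by norm_num)).atTop_div_const (by norm_num)
  have h2 : Tendsto (fun x : ℝ => -(x ^ 2) / 2) atTop atBot := by
    simp_rw [neg_div]
    exact tendsto_neg_atBot_iff.2 hsq
  have h3 : Tendsto (fun x : ℝ => Real.exp (-(x ^ 2) / 2)) atTop (𝓝 0) :=
    Real.tendsto_exp_atBot.comp h2
  have h4 := h3.const_mul ((Real.sqrt (2 * Real.pi))⁻¹)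
  rw [mul_zero] at h4
  exact h4.congr fun x => rfl

lemma integral_Ioi_nphi (a : ℝ) : ∫ x in Ioi a, nphi x = 1 - nPhi a := by
  have h := intervalIntegral.integral_Iic_add_Ioi (b := a) (μ := volume)
    integrable_nphi.integrableOn integrable_nphi.integrableOn
  rw [integral_nphi] at h
  have hd : nPhi a = ∫ x in Iic a, nphi x := rfl
  rw [hd]; linarith

lemma nPhi_pos (a : ℝ) : 0 < nPhi a := by
  have h := (setIntegral_pos_iff_support_of_nonneg_ae (μ := volume) (s := Iic a)
    (ae_of_all _ fun x => nphi_nonneg x) integrable_nphi.integrableOn)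
  have hsupp : Function.support nphi = Set.univ :=
    Set.eq_univ_of_forall fun x => Function.mem_support.2 (nphi_pos x).ne'
  have hd : nPhi a = ∫ x in Iic a, nphi x := rfl
  rw [hd, h, hsupp, Set.univ_inter, Real.volume_Iic]
  exact ENNReal.zero_lt_top

lemma one_sub_nPhi_pos (a : ℝ) : 0 < 1 - nPhi a := by
  rw [← integral_Ioi_nphi]
  have h := (setIntegral_pos_iff_support_of_nonneg_ae (μ := volume) (s := Ioi a)
    (ae_of_all _ fun x => nphi_nonneg x) integrable_nphi.integrableOn)
  have hsupp : Function.support nphi = Set.univ :=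
    Set.eq_univ_of_forall fun x => Function.mem_support.2 (nphi_pos x).ne'
  rw [h, hsupp, Set.univ_inter, Real.volume_Ioi]
  exact ENNReal.zero_lt_top

lemma nPhi_neg (a : ℝ) : nPhi (-a) = 1 - nPhi a := by
  have h := integral_comp_neg_Iic (-a) nphi
  simp_rw [nphi_even, neg_neg] at h
  have hd : nPhi (-a) = ∫ x in Iic (-a), nphi x := rfl
  rw [hd, h, integral_Ioi_nphi]

lemma integral_Ioi_mul_nphi (a : ℝ) : ∫ x in Ioi a, x * nphi x = nphi a := by
  have h := integral_Ioi_of_hasDerivAt_of_tendsto' (f := fun t => -nphi t)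
    (f' := fun x => x * nphi x) (a := a) (m := 0)
    (fun x _ => hasDerivAt_neg_nphi x) integrable_mul_nphi.integrableOn
    (by simpa using tendsto_nphi_atTop.neg)
  simpa using h

lemma integral_Iic_mul_nphi (a : ℝ) : ∫ x in Iic a, x * nphi x = -nphi a := by
  have h := integral_comp_neg_Iic a (fun x => x * nphi x)
  rw [integral_Ioi_mul_nphi, nphi_even] at h
  simp_rw [nphi_even, neg_mul] at h
  rw [integral_neg] at h
  linarith

end OneDim

section Translate
open Set

lemma integral_Ioi_comp_sub (f : ℝ → ℝ) (a θ : ℝ) :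
    ∫ x in Ioi a, f (x - θ) = ∫ x in Ioi (a - θ), f x := by
  have key : ∀ x : ℝ, (Ioi (a - θ)).indicator f x
      = (Ioi a).indicator (fun y => f (y - θ)) (x + θ) := by
    intro x
    by_cases hx : a - θ < x
    · rw [indicator_of_mem (mem_Ioi.2 hx), indicator_of_mem (mem_Ioi.2 (sub_lt_iff_lt_add.1 hx))]
      simp
    · rw [indicator_of_notMem (fun h => hx (mem_Ioi.1 h)), indicator_of_notMem (by
        simp only [mem_Ioi]; intro h; exact hx (by linarith))]
  symm
  calc ∫ x in Ioi (a - θ), f x = ∫ x, (Ioi (a - θ)).indicator f x := by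
        rw [integral_indicator measurableSet_Ioi]
    _ = ∫ x, (Ioi a).indicator (fun y => f (y - θ)) (x + θ) := by simp_rw [key]
    _ = ∫ x, (Ioi a).indicator (fun y => f (y - θ)) x := integral_add_right_eq_self _ θ
    _ = ∫ x in Ioi a, f (x - θ) := integral_indicator measurableSet_Ioi

lemma integral_Iic_comp_sub (f : ℝ → ℝ) (a θ : ℝ) :
    ∫ x in Iic a, f (x - θ) = ∫ x in Iic (a - θ), f x := by
  have key : ∀ x : ℝ, (Iic (a - θ)).indicator f x
      = (Iic a).indicator (fun y => f (y - θ)) (x + θ) := by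
    intro x
    by_cases hx : x ≤ a - θ
    · rw [indicator_of_mem (mem_Iic.2 hx), indicator_of_mem (mem_Iic.2 (le_sub_iff_add_le.1 hx))]
      simp
    · rw [indicator_of_notMem (fun h => hx (mem_Iic.1 h)), indicator_of_notMem (by
        simp only [mem_Iic]; intro h; exact hx (by linarith))]
  symm
  calc ∫ x in Iic (a - θ), f x = ∫ x, (Iic (a - θ)).indicator f x := by
        rw [integral_indicator measurableSet_Iic]
    _ = ∫ x, (Iic a).indicator (fun y => f (y - θ)) (x + θ) := by simp_rw [key]
    _ = ∫ x, (Iic a).indicator (fun y => f (y - θ)) x := integral_add_right_eq_self _ θ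
    _ = ∫ x in Iic a, f (x - θ) := integral_indicator measurableSet_Iic

end Translate

section TN
open Set

lemma tn_true_eq (θ : ℝ) :
    tn θ true = (Ioi (0:ℝ)).indicator (fun z => nphi (z - θ) / nPhi θ) := by
  funext z
  by_cases h : (0:ℝ) < z
  · rw [indicator_of_mem (mem_Ioi.2 h)]; simp [tn, h]
  · rw [indicator_of_notMem (fun hh => h (mem_Ioi.1 hh))]; simp [tn, h]

lemma tn_false_eq (θ : ℝ) :
    tn θ false = (Iio (0:ℝ)).indicator (fun z => nphi (z - θ) / (1 - nPhi θ)) := by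
  funext z
  by_cases h : z < (0:ℝ)
  · rw [indicator_of_mem (mem_Iio.2 h)]; simp [tn, h]
  · rw [indicator_of_notMem (fun hh => h (mem_Iio.1 hh))]; simp [tn, h]

lemma tn_nonneg (θ : ℝ) (b : Bool) (z : ℝ) : 0 ≤ tn θ b z := by
  cases b
  · rw [tn_false_eq]
    exact Set.indicator_nonneg (fun z _ => div_nonneg (nphi_nonneg _) (one_sub_nPhi_pos θ).le) z
  · rw [tn_true_eq]
    exact Set.indicator_nonneg (fun z _ => div_nonneg (nphi_nonneg _) (nPhi_pos θ).le) z

lemma measurable_tn (θ : ℝ) (b : Bool) : Measurable (tn θ b) := by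
  cases b
  · rw [tn_false_eq]
    exact ((continuous_nphi.comp (continuous_id.sub continuous_const)).div_const
      _).measurable.indicator measurableSet_Iio
  · rw [tn_true_eq]
    exact ((continuous_nphi.comp (continuous_id.sub continuous_const)).div_const
      _).measurable.indicator measurableSet_Ioi

lemma integrable_nphi_sub (θ : ℝ) : Integrable (fun z => nphi (z - θ)) :=
  integrable_nphi.comp_sub_right θ

lemma integrable_tn (θ : ℝ) (b : Bool) : Integrable (tn θ b) := by
  cases b
  · rw [tn_false_eq]
    exact (((integrable_nphi_sub θ).div_const _).indicator measurableSet_Iio)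
  · rw [tn_true_eq]
    exact (((integrable_nphi_sub θ).div_const _).indicator measurableSet_Ioi)

lemma integrable_mul_nphi_sub (θ : ℝ) : Integrable (fun z => z * nphi (z - θ)) := by
  have h := (integrable_mul_nphi.comp_sub_right θ).add ((integrable_nphi_sub θ).const_mul θ)
  refine h.congr (ae_of_all _ fun z => ?_)
  simp only [Pi.add_apply]; ring

lemma integral_tn (θ : ℝ) (b : Bool) : ∫ z, tn θ b z = 1 := by
  cases b
  · rw [tn_false_eq, integral_indicator measurableSet_Iio,
      ← integral_Iic_eq_integral_Iio, integral_div, integral_Iic_comp_sub nphi 0 θ]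
    have : nPhi (0 - θ) = 1 - nPhi θ := by rw [zero_sub, nPhi_neg]
    rw [show (∫ x in Iic (0 - θ), nphi x) = nPhi (0 - θ) from rfl, this]
    exact div_self (one_sub_nPhi_pos θ).ne'
  · rw [tn_true_eq, integral_indicator measurableSet_Ioi, integral_div,
      integral_Ioi_comp_sub nphi 0 θ, integral_Ioi_nphi, zero_sub, nPhi_neg]
    simp only [sub_sub_cancel]
    exact div_self (nPhi_pos θ).ne'

lemma mul_tn_false_eq (θ : ℝ) : (fun z => z * tn θ false z)
    = (Iio (0:ℝ)).indicator (fun z => z * nphi (z - θ) / (1 - nPhi θ)) := by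
  funext z
  by_cases hz : z < (0:ℝ)
  · rw [tn_false_eq, indicator_of_mem (mem_Iio.2 hz), indicator_of_mem (mem_Iio.2 hz)]; ring
  · rw [tn_false_eq, indicator_of_notMem (fun hh => hz (mem_Iio.1 hh)),
      indicator_of_notMem (fun hh => hz (mem_Iio.1 hh)), mul_zero]

lemma mul_tn_true_eq (θ : ℝ) : (fun z => z * tn θ true z)
    = (Ioi (0:ℝ)).indicator (fun z => z * nphi (z - θ) / nPhi θ) := by
  funext z
  by_cases hz : (0:ℝ) < z
  · rw [tn_true_eq, indicator_of_mem (mem_Ioi.2 hz), indicator_of_mem (mem_Ioi.2 hz)]; ring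
  · rw [tn_true_eq, indicator_of_notMem (fun hh => hz (mem_Ioi.1 hh)),
      indicator_of_notMem (fun hh => hz (mem_Ioi.1 hh)), mul_zero]

lemma integrable_mul_tn (θ : ℝ) (b : Bool) : Integrable (fun z => z * tn θ b z) := by
  cases b
  · rw [mul_tn_false_eq]
    exact (((integrable_mul_nphi_sub θ).div_const (1 - nPhi θ)).indicator
      (measurableSet_Iio (a := (0:ℝ))))
  · rw [mul_tn_true_eq]
    exact (((integrable_mul_nphi_sub θ).div_const (nPhi θ)).indicator
      (measurableSet_Ioi (a := (0:ℝ))))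

lemma integrable_abs_mul_tn (θ : ℝ) (b : Bool) : Integrable (fun z => |z| * tn θ b z) := by
  refine (integrable_mul_tn θ b).abs.congr (ae_of_all _ fun z => ?_)
  simp only [abs_mul, abs_of_nonneg (tn_nonneg θ b z)]

lemma integral_Ioi_mul_nphi_sub (θ : ℝ) :
    ∫ z in Ioi (0:ℝ), z * nphi (z - θ) = nphi θ + θ * nPhi θ := by
  have h1 : ∀ z : ℝ, z * nphi (z - θ) = (fun u => (u + θ) * nphi u) (z - θ) := by
    intro z; simp [sub_add_cancel]
  simp_rw [h1]
  rw [integral_Ioi_comp_sub (fun u => (u + θ) * nphi u) 0 θ, zero_sub]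
  have h2 : ∀ u : ℝ, (u + θ) * nphi u = u * nphi u + θ * nphi u := fun u => by ring
  simp_rw [h2]
  rw [integral_add integrable_mul_nphi.integrableOn
    ((integrable_nphi.const_mul θ).integrableOn)]
  rw [integral_Ioi_mul_nphi]
  have h3 : ∫ x in Ioi (-θ), θ * nphi x = θ * (1 - nPhi (-θ)) := by
    rw [integral_const_mul, integral_Ioi_nphi]
  rw [h3, nPhi_neg, nphi_even]
  ring

lemma integral_Iic_mul_nphi_sub (θ : ℝ) :
    ∫ z in Iic (0:ℝ), z * nphi (z - θ) = -nphi θ + θ * (1 - nPhi θ) := by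
  have h1 : ∀ z : ℝ, z * nphi (z - θ) = (fun u => (u + θ) * nphi u) (z - θ) := by
    intro z; simp [sub_add_cancel]
  simp_rw [h1]
  rw [integral_Iic_comp_sub (fun u => (u + θ) * nphi u) 0 θ, zero_sub]
  have h2 : ∀ u : ℝ, (u + θ) * nphi u = u * nphi u + θ * nphi u := fun u => by ring
  simp_rw [h2]
  rw [integral_add integrable_mul_nphi.integrableOn
    ((integrable_nphi.const_mul θ).integrableOn)]
  rw [integral_Iic_mul_nphi]
  have h3 : ∫ x in Iic (-θ), θ * nphi x = θ * nPhi (-θ) := by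
    rw [integral_const_mul]; rfl
  rw [h3, nPhi_neg, nphi_even]

lemma integral_mul_tn (θ : ℝ) (b : Bool) :
    ∫ z, z * tn θ b z
      = θ + (if b then nphi θ / nPhi θ else -(nphi θ / (1 - nPhi θ))) := by
  cases b
  · rw [mul_tn_false_eq, integral_indicator measurableSet_Iio, ← integral_Iic_eq_integral_Iio,
      integral_div, integral_Iic_mul_nphi_sub]
    rw [if_neg (by simp)]
    field_simp [(one_sub_nPhi_pos θ).ne']
    ring
  · rw [mul_tn_true_eq, integral_indicator measurableSet_Ioi, integral_div,
      integral_Ioi_mul_nphi_sub]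
    rw [if_pos rfl]
    field_simp [(nPhi_pos θ).ne']
    ring

end TN

section CoV

variable {p : ℕ} {E : Type*} [NormedAddCommGroup E] [NormedSpace ℝ E]

lemma map_mulVec_volume (M : Matrix (Fin p) (Fin p) ℝ) (hM : Invertible M)
    (hdet : M.det ≠ 0) :
    Measure.map
      (⇑((Matrix.toLinearEquiv' M hM).toContinuousLinearEquiv.toHomeomorph.toMeasurableEquiv))
      (volume : Measure (Fin p → ℝ)) = ENNReal.ofReal |M.det|⁻¹ • volume := by
  have h : ⇑((Matrix.toLinearEquiv' M hM).toContinuousLinearEquiv.toHomeomorph.toMeasurableEquiv)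
      = Matrix.toLin' M := rfl
  rw [h, Real.map_matrix_volume_pi_eq_smul_volume_pi hdet, abs_inv]

lemma integral_comp_mulVec (M : Matrix (Fin p) (Fin p) ℝ) (hdet : M.det ≠ 0)
    (f : (Fin p → ℝ) → E) :
    ∫ x, f (M.mulVec x) = |M.det|⁻¹ • ∫ x, f x := by
  have hM : Invertible M := M.invertibleOfIsUnitDet (isUnit_iff_ne_zero.2 hdet)
  set e := (Matrix.toLinearEquiv' M hM).toContinuousLinearEquiv.toHomeomorph.toMeasurableEquiv
    with he
  have h1 : ∫ x, f (M.mulVec x) = ∫ y, f y ∂(Measure.map (⇑e) volume) :=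
    (e.measurableEmbedding.integral_map f).symm
  rw [h1, he, map_mulVec_volume M hM hdet, integral_smul_measure,
    ENNReal.toReal_ofReal (by positivity)]

lemma integrable_comp_mulVec_iff (M : Matrix (Fin p) (Fin p) ℝ) (hdet : M.det ≠ 0)
    (f : (Fin p → ℝ) → E) :
    Integrable (fun x => f (M.mulVec x)) ↔ Integrable f := by
  have hM : Invertible M := M.invertibleOfIsUnitDet (isUnit_iff_ne_zero.2 hdet)
  set e := (Matrix.toLinearEquiv' M hM).toContinuousLinearEquiv.toHomeomorph.toMeasurableEquiv
    with he
  have h := e.measurableEmbedding.integrable_map_iff (μ := volume) (g := f)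
  rw [he, map_mulVec_volume M hM hdet,
    integrable_smul_measure (by simp [hdet]) (by simp)] at h
  exact h.symm

lemma integrable_comp_add_right_iff (a : Fin p → ℝ) (f : (Fin p → ℝ) → E) :
    Integrable (fun x => f (x + a)) ↔ Integrable f := by
  set e := (Homeomorph.addRight a).toMeasurableEquiv with he
  have h := e.measurableEmbedding.integrable_map_iff (μ := volume) (g := f)
  have hmap : Measure.map (⇑e) (volume : Measure (Fin p → ℝ)) = volume := by
    have h2 : ⇑e = (· + a) := rfl
    rw [h2]; exact MeasureTheory.map_add_right_eq_self volume a
  rw [hmap] at h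
  exact h.symm

end CoV

section StdGauss

variable {p : ℕ}

lemma integrable_prod_nphi : Integrable (fun y : Fin p → ℝ => ∏ i, nphi (y i)) :=
  Integrable.fintype_prod fun _ => integrable_nphi

lemma integral_prod_nphi : ∫ y : Fin p → ℝ, ∏ i, nphi (y i) = 1 := by
  rw [MeasureTheory.integral_fintype_prod_volume_eq_prod]
  simp [integral_nphi]

def coordFac (k i : Fin p) : ℝ → ℝ := if i = k then (fun t => t * nphi t) else nphi

def coordFacAbs (k i : Fin p) : ℝ → ℝ := if i = k then (fun t => |t| * nphi t) else nphi

lemma prod_nphi_mul_coord_eq (k : Fin p) :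
    (fun y : Fin p → ℝ => (∏ i, nphi (y i)) * y k) = fun y => ∏ i, coordFac k i (y i) := by
  funext y
  rw [← Finset.mul_prod_erase Finset.univ (fun i => coordFac k i (y i)) (Finset.mem_univ k),
    ← Finset.mul_prod_erase Finset.univ (fun i => nphi (y i)) (Finset.mem_univ k),
    show (∏ i ∈ Finset.univ.erase k, coordFac k i (y i))
        = ∏ i ∈ Finset.univ.erase k, nphi (y i) from
      Finset.prod_congr rfl fun i hi => by
        rw [show coordFac k i = nphi from if_neg (Finset.ne_of_mem_erase hi)]]
  rw [show coordFac k k = fun t => t * nphi t from if_pos rfl]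
  ring

lemma prod_nphi_mul_abs_eq (k : Fin p) :
    (fun y : Fin p → ℝ => (∏ i, nphi (y i)) * |y k|) = fun y => ∏ i, coordFacAbs k i (y i) := by
  funext y
  rw [← Finset.mul_prod_erase Finset.univ (fun i => coordFacAbs k i (y i)) (Finset.mem_univ k),
    ← Finset.mul_prod_erase Finset.univ (fun i => nphi (y i)) (Finset.mem_univ k),
    show (∏ i ∈ Finset.univ.erase k, coordFacAbs k i (y i))
        = ∏ i ∈ Finset.univ.erase k, nphi (y i) from
      Finset.prod_congr rfl fun i hi => by
        rw [show coordFacAbs k i = nphi from if_neg (Finset.ne_of_mem_erase hi)]]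
  rw [show coordFacAbs k k = fun t => |t| * nphi t from if_pos rfl]
  ring

lemma integrable_prod_nphi_mul_coord (k : Fin p) :
    Integrable (fun y : Fin p → ℝ => (∏ i, nphi (y i)) * y k) := by
  rw [prod_nphi_mul_coord_eq]
  refine Integrable.fintype_prod fun i => ?_
  by_cases h : i = k
  · rw [show coordFac k i = fun t => t * nphi t from if_pos h]
    exact integrable_mul_nphi
  · rw [show coordFac k i = nphi from if_neg h]
    exact integrable_nphi

lemma integrable_prod_nphi_mul_abs (k : Fin p) :
    Integrable (fun y : Fin p → ℝ => (∏ i, nphi (y i)) * |y k|) := by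
  rw [prod_nphi_mul_abs_eq]
  refine Integrable.fintype_prod fun i => ?_
  by_cases h : i = k
  · rw [show coordFacAbs k i = fun t => |t| * nphi t from if_pos h]
    exact integrable_abs_mul_nphi
  · rw [show coordFacAbs k i = nphi from if_neg h]
    exact integrable_nphi

lemma integral_prod_nphi_mul_coord (k : Fin p) :
    ∫ y : Fin p → ℝ, (∏ i, nphi (y i)) * y k = 0 := by
  rw [prod_nphi_mul_coord_eq, MeasureTheory.integral_fintype_prod_volume_eq_prod]
  refine Finset.prod_eq_zero (Finset.mem_univ k) ?_
  rw [show coordFac k k = fun t => t * nphi t from if_pos rfl]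
  exact integral_mul_nphi

lemma integral_prod_nphi_mul_abs (k : Fin p) :
    ∫ y : Fin p → ℝ, (∏ i, nphi (y i)) * |y k| = ∫ t : ℝ, |t| * nphi t := by
  rw [prod_nphi_mul_abs_eq, MeasureTheory.integral_fintype_prod_volume_eq_prod,
    ← Finset.mul_prod_erase Finset.univ _ (Finset.mem_univ k),
    show (∏ i ∈ Finset.univ.erase k, ∫ x : ℝ, coordFacAbs k i x)
        = ∏ i ∈ Finset.univ.erase k, (1:ℝ) from
      Finset.prod_congr rfl fun i hi => by
        rw [show coordFacAbs k i = nphi from if_neg (Finset.ne_of_mem_erase hi)]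
        exact integral_nphi,
    show coordFacAbs k k = fun t => |t| * nphi t from if_pos rfl]
  simp

end StdGauss

section Gauss

variable {p : ℕ} {E : Type*} [NormedAddCommGroup E] [NormedSpace ℝ E]
variable {S A : Matrix (Fin p) (Fin p) ℝ}

lemma mvn_nonneg {q : ℕ} (μ : Fin q → ℝ) (Λ : Matrix (Fin q) (Fin q) ℝ) (x : Fin q → ℝ) :
    0 ≤ mvn μ Λ x :=
  mul_nonneg (Real.sqrt_nonneg _) (Real.exp_pos _).le

lemma mvn_comp (hAA : A * A = S) (hA : Aᵀ = A) (hdA : A.det ≠ 0) (hdet : S.det ≠ 0)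
    (μ y : Fin p → ℝ) :
    mvn μ S⁻¹ (A⁻¹.mulVec y + μ) = |A.det| * ∏ i, nphi (y i) := by
  have hUA : IsUnit A.det := isUnit_iff_ne_zero.2 hdA
  have hU : IsUnit S.det := isUnit_iff_ne_zero.2 hdet
  have hSinvinv : (S⁻¹)⁻¹ = S := Matrix.nonsing_inv_nonsing_inv S hU
  have hvec : (A⁻¹.mulVec y + μ) - μ = A⁻¹.mulVec y := add_sub_cancel_right _ _
  have hquad : dotProduct (A⁻¹.mulVec y) (S.mulVec (A⁻¹.mulVec y)) = ∑ i, y i ^ 2 := by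
    have h1 : S.mulVec (A⁻¹.mulVec y) = A.mulVec y := by
      rw [Matrix.mulVec_mulVec, ← hAA, Matrix.mul_assoc, Matrix.mul_nonsing_inv A hUA,
        Matrix.mul_one]
    rw [h1, Matrix.dotProduct_mulVec, ← Matrix.mulVec_transpose, hA, Matrix.mulVec_mulVec,
      Matrix.mul_nonsing_inv A hUA, Matrix.one_mulVec]
    simp [dotProduct, sq]
  have hconst : Real.sqrt (((2 * Real.pi) ^ p * (S⁻¹).det)⁻¹)
      = |A.det| * ((Real.sqrt (2 * Real.pi))⁻¹) ^ p := by
    have hdS : (S⁻¹).det = (S.det)⁻¹ := by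
      rw [Matrix.det_nonsing_inv, Ring.inverse_eq_inv]
    have hSd : S.det = A.det * A.det := by rw [← hAA, Matrix.det_mul]
    have hsq : Real.sqrt ((2 * Real.pi) ^ p) = (Real.sqrt (2 * Real.pi)) ^ p := by
      have h2 : ((Real.sqrt (2 * Real.pi)) ^ p) ^ 2 = (2 * Real.pi) ^ p := by
        rw [← pow_mul, mul_comm p 2, pow_mul, Real.sq_sqrt (by positivity)]
      rw [← h2, Real.sqrt_sq (by positivity)]
    rw [hdS, hSd, mul_inv, inv_inv,
      Real.sqrt_mul (by positivity) (A.det * A.det),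
      Real.sqrt_mul_self_eq_abs, Real.sqrt_inv, hsq, ← inv_pow, mul_comm]
  have hprod : ∏ i, nphi (y i)
      = ((Real.sqrt (2 * Real.pi))⁻¹) ^ p * ∏ i, Real.exp (-(y i ^ 2) / 2) := by
    unfold nphi
    rw [Finset.prod_mul_distrib, Finset.prod_const, Finset.card_univ, Fintype.card_fin]
  have hexp : Real.exp (-(∑ i, y i ^ 2) / 2) = ∏ i, Real.exp (-(y i ^ 2) / 2) := by
    rw [show -(∑ i, y i ^ 2) / 2 = ∑ i, -(y i ^ 2) / 2 by
      rw [← Finset.sum_div, ← Finset.sum_neg_distrib], Real.exp_sum]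
  unfold mvn
  rw [hvec, hSinvinv, hquad, hconst, hexp, hprod]
  ring

lemma gauss_transfer (hAA : A * A = S) (hA : Aᵀ = A) (hdA : A.det ≠ 0) (hdet : S.det ≠ 0)
    (μ : Fin p → ℝ) (f : (Fin p → ℝ) → E) :
    ∫ x, mvn μ S⁻¹ x • f x = ∫ y, (∏ i, nphi (y i)) • f (A⁻¹.mulVec y + μ) := by
  have hdB : (A⁻¹).det ≠ 0 := by
    rw [Matrix.det_nonsing_inv, Ring.inverse_eq_inv]; exact inv_ne_zero hdA
  have hBA : |(A⁻¹).det|⁻¹ = |A.det| := by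
    rw [Matrix.det_nonsing_inv, Ring.inverse_eq_inv, abs_inv, inv_inv]
  have hAne : |A.det| ≠ 0 := by simpa using hdA
  have h1 : ∫ x, mvn μ S⁻¹ x • f x = ∫ x, mvn μ S⁻¹ (x + μ) • f (x + μ) :=
    (integral_add_right_eq_self (fun x => mvn μ S⁻¹ x • f x) μ).symm
  have h2 := integral_comp_mulVec (A⁻¹) hdB (fun x => mvn μ S⁻¹ (x + μ) • f (x + μ))
  have h3 : (fun y => mvn μ S⁻¹ ((A⁻¹).mulVec y + μ) • f ((A⁻¹).mulVec y + μ))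
      = fun y => |A.det| • ((∏ i, nphi (y i)) • f ((A⁻¹).mulVec y + μ)) := by
    funext y
    rw [mvn_comp hAA hA hdA hdet, ← smul_smul]
  rw [h3, integral_smul, hBA] at h2
  have h4 := congrArg (fun t => |A.det|⁻¹ • t) h2
  simp only [smul_smul, inv_mul_cancel₀ hAne, one_smul] at h4
  rw [h1, ← h4]

lemma gauss_transfer_integrable (hAA : A * A = S) (hA : Aᵀ = A) (hdA : A.det ≠ 0)
    (hdet : S.det ≠ 0) (μ : Fin p → ℝ) (f : (Fin p → ℝ) → E) :
    Integrable (fun x => mvn μ S⁻¹ x • f x)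
      ↔ Integrable (fun y => (∏ i, nphi (y i)) • f ((A⁻¹).mulVec y + μ)) := by
  have hdB : (A⁻¹).det ≠ 0 := by
    rw [Matrix.det_nonsing_inv, Ring.inverse_eq_inv]; exact inv_ne_zero hdA
  have hAne : |A.det| ≠ 0 := by simpa using hdA
  have e1 : Integrable (fun x => mvn μ S⁻¹ x • f x)
      ↔ Integrable (fun x => mvn μ S⁻¹ (x + μ) • f (x + μ)) :=
    (integrable_comp_add_right_iff μ (fun x => mvn μ S⁻¹ x • f x)).symm
  have e2 : Integrable (fun x => mvn μ S⁻¹ (x + μ) • f (x + μ))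
      ↔ Integrable (fun y => mvn μ S⁻¹ ((A⁻¹).mulVec y + μ) • f ((A⁻¹).mulVec y + μ)) :=
    (integrable_comp_mulVec_iff (A⁻¹) hdB (fun x => mvn μ S⁻¹ (x + μ) • f (x + μ))).symm
  have h3 : (fun y => mvn μ S⁻¹ ((A⁻¹).mulVec y + μ) • f ((A⁻¹).mulVec y + μ))
      = |A.det| • (fun y => (∏ i, nphi (y i)) • f ((A⁻¹).mulVec y + μ)) := by
    funext y
    rw [Pi.smul_apply, mvn_comp hAA hA hdA hdet, ← smul_smul]
  rw [e1, e2, h3, integrable_smul_iff hAne]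

lemma integral_mvn (hAA : A * A = S) (hA : Aᵀ = A) (hdA : A.det ≠ 0) (hdet : S.det ≠ 0)
    (μ : Fin p → ℝ) : ∫ x, mvn μ S⁻¹ x = 1 := by
  have h := gauss_transfer hAA hA hdA hdet μ (fun _ => (1:ℝ))
  simp only [smul_eq_mul, mul_one] at h
  rw [h, integral_prod_nphi]

lemma integrable_mvn (hAA : A * A = S) (hA : Aᵀ = A) (hdA : A.det ≠ 0) (hdet : S.det ≠ 0)
    (μ : Fin p → ℝ) : Integrable (mvn μ S⁻¹) := by
  have h := (gauss_transfer_integrable hAA hA hdA hdet μ (fun _ => (1:ℝ)))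
  simp only [smul_eq_mul, mul_one] at h
  exact h.2 integrable_prod_nphi

lemma prod_nphi_affine_eq (B : Matrix (Fin p) (Fin p) ℝ) (μ : Fin p → ℝ) (j : Fin p) :
    (fun y : Fin p → ℝ => (∏ i, nphi (y i)) * (B.mulVec y + μ) j)
      = fun y => (∑ k, B j k * ((∏ i, nphi (y i)) * y k)) + μ j * ∏ i, nphi (y i) := by
  funext y
  simp only [Pi.add_apply, Matrix.mulVec, dotProduct]
  rw [mul_add, Finset.mul_sum]
  congr 1
  · exact Finset.sum_congr rfl fun k _ => by ring
  · ring

lemma integrable_mvn_mul_coord (hAA : A * A = S) (hA : Aᵀ = A) (hdA : A.det ≠ 0)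
    (hdet : S.det ≠ 0) (μ : Fin p → ℝ) (j : Fin p) :
    Integrable (fun x => mvn μ S⁻¹ x * x j) := by
  have h := gauss_transfer_integrable hAA hA hdA hdet μ (fun x => x j)
  simp only [smul_eq_mul] at h
  refine h.2 ?_
  rw [prod_nphi_affine_eq]
  exact (integrable_finset_sum _ fun k _ =>
    (integrable_prod_nphi_mul_coord k).const_mul _).add (integrable_prod_nphi.const_mul _)

lemma integral_mvn_mul_coord (hAA : A * A = S) (hA : Aᵀ = A) (hdA : A.det ≠ 0)
    (hdet : S.det ≠ 0) (μ : Fin p → ℝ) (j : Fin p) :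
    ∫ x, mvn μ S⁻¹ x * x j = μ j := by
  have h := gauss_transfer hAA hA hdA hdet μ (fun x => x j)
  simp only [smul_eq_mul] at h
  rw [h, prod_nphi_affine_eq,
    integral_add (integrable_finset_sum _ fun k _ =>
      (integrable_prod_nphi_mul_coord k).const_mul _) (integrable_prod_nphi.const_mul _),
    integral_finset_sum _ (fun k _ => (integrable_prod_nphi_mul_coord k).const_mul _)]
  simp only [MeasureTheory.integral_const_mul, integral_prod_nphi_mul_coord, mul_zero,
    Finset.sum_const_zero, integral_prod_nphi, mul_one, zero_add]

lemma integrable_mvn_mul_abs (hAA : A * A = S) (hA : Aᵀ = A) (hdA : A.det ≠ 0)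
    (hdet : S.det ≠ 0) (μ : Fin p → ℝ) (j : Fin p) :
    Integrable (fun x => mvn μ S⁻¹ x * |x j|) := by
  refine (integrable_mvn_mul_coord hAA hA hdA hdet μ j).abs.congr (ae_of_all _ fun x => ?_)
  simp only [abs_mul, abs_of_nonneg (mvn_nonneg μ _ x)]

lemma integral_mvn_mul_abs_le (hAA : A * A = S) (hA : Aᵀ = A) (hdA : A.det ≠ 0)
    (hdet : S.det ≠ 0) (μ : Fin p → ℝ) (j : Fin p) :
    ∫ x, mvn μ S⁻¹ x * |x j|
      ≤ (∑ k, |(A⁻¹) j k| * ∫ t : ℝ, |t| * nphi t) + |μ j| := by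
  have h := gauss_transfer hAA hA hdA hdet μ (fun x => |x j|)
  simp only [smul_eq_mul] at h
  rw [h]
  have hDint : Integrable (fun y : Fin p → ℝ =>
      (∑ k, |(A⁻¹) j k| * ((∏ i, nphi (y i)) * |y k|)) + |μ j| * ∏ i, nphi (y i)) :=
    (integrable_finset_sum _ fun k _ =>
      (integrable_prod_nphi_mul_abs k).const_mul _).add (integrable_prod_nphi.const_mul _)
  have hbound : ∀ y : Fin p → ℝ, (∏ i, nphi (y i)) * |((A⁻¹).mulVec y + μ) j|
      ≤ (∑ k, |(A⁻¹) j k| * ((∏ i, nphi (y i)) * |y k|)) + |μ j| * ∏ i, nphi (y i) := by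
    intro y
    have hnn : 0 ≤ ∏ i, nphi (y i) := Finset.prod_nonneg fun i _ => nphi_nonneg _
    have hmv : ((A⁻¹).mulVec y + μ) j = (∑ k, (A⁻¹) j k * y k) + μ j := by
      simp [Matrix.mulVec, dotProduct]
    have h1 : |((A⁻¹).mulVec y + μ) j| ≤ (∑ k, |(A⁻¹) j k| * |y k|) + |μ j| := by
      rw [hmv]
      refine (abs_add_le _ _).trans (add_le_add_left ?_ _)
      refine (Finset.abs_sum_le_sum_abs _ _).trans
        (le_of_eq (Finset.sum_congr rfl fun k _ => abs_mul _ _))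
    calc (∏ i, nphi (y i)) * |((A⁻¹).mulVec y + μ) j|
        ≤ (∏ i, nphi (y i)) * ((∑ k, |(A⁻¹) j k| * |y k|) + |μ j|) :=
          mul_le_mul_of_nonneg_left h1 hnn
      _ = (∑ k, |(A⁻¹) j k| * ((∏ i, nphi (y i)) * |y k|)) + |μ j| * ∏ i, nphi (y i) := by
          rw [mul_add, Finset.mul_sum]
          congr 1
          · exact Finset.sum_congr rfl fun k _ => by ring
          · ring
  have hLint : Integrable (fun y : Fin p → ℝ => (∏ i, nphi (y i)) * |((A⁻¹).mulVec y + μ) j|) := by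
    have h2 := (gauss_transfer_integrable hAA hA hdA hdet μ (fun x => |x j|)).1
      (integrable_mvn_mul_abs hAA hA hdA hdet μ j)
    simpa [smul_eq_mul] using h2
  refine (integral_mono hLint hDint hbound).trans_eq ?_
  rw [integral_add (integrable_finset_sum _ fun k _ =>
      (integrable_prod_nphi_mul_abs k).const_mul _) (integrable_prod_nphi.const_mul _),
    integral_finset_sum _ (fun k _ => (integrable_prod_nphi_mul_abs k).const_mul _)]
  simp only [MeasureTheory.integral_const_mul, integral_prod_nphi, mul_one]
  congr 1
  refine Finset.sum_congr rfl fun k _ => ?_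
  rw [integral_prod_nphi_mul_abs]

end Gauss


section ProdPick

variable {m : ℕ}

def pickFac (f : Fin m → ℝ → ℝ) (g : ℝ → ℝ) (k i : Fin m) : ℝ → ℝ :=
  if i = k then (fun t => f i t * g t) else f i

lemma prod_mul_pick_eq (f : Fin m → ℝ → ℝ) (g : ℝ → ℝ) (k : Fin m) :
    (fun z : Fin m → ℝ => (∏ i, f i (z i)) * g (z k))
      = fun z => ∏ i, pickFac f g k i (z i) := by
  funext z
  rw [← Finset.mul_prod_erase Finset.univ (fun i => pickFac f g k i (z i)) (Finset.mem_univ k),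
    ← Finset.mul_prod_erase Finset.univ (fun i => f i (z i)) (Finset.mem_univ k),
    show (∏ i ∈ Finset.univ.erase k, pickFac f g k i (z i))
        = ∏ i ∈ Finset.univ.erase k, f i (z i) from
      Finset.prod_congr rfl fun i hi => by
        rw [show pickFac f g k i = f i from if_neg (Finset.ne_of_mem_erase hi)],
    show pickFac f g k k = fun t => f k t * g t from if_pos rfl]
  ring

lemma integrable_prod_mul_pick (f : Fin m → ℝ → ℝ) (g : ℝ → ℝ) (k : Fin m)
    (hf : ∀ i, Integrable (f i)) (hk : Integrable fun t => f k t * g t) :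
    Integrable (fun z : Fin m → ℝ => (∏ i, f i (z i)) * g (z k)) := by
  rw [prod_mul_pick_eq]
  refine Integrable.fintype_prod fun i => ?_
  by_cases h : i = k
  · subst h; rw [show pickFac f g i i = fun t => f i t * g t from if_pos rfl]; exact hk
  · rw [show pickFac f g k i = f i from if_neg h]; exact hf i

lemma integral_prod_mul_pick (f : Fin m → ℝ → ℝ) (g : ℝ → ℝ) (k : Fin m)
    (hval : ∀ i, ∫ t, f i t = 1) :
    ∫ z : Fin m → ℝ, (∏ i, f i (z i)) * g (z k) = ∫ t, f k t * g t := by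
  rw [prod_mul_pick_eq, MeasureTheory.integral_fintype_prod_volume_eq_prod,
    ← Finset.mul_prod_erase Finset.univ _ (Finset.mem_univ k),
    show (∏ i ∈ Finset.univ.erase k, ∫ x : ℝ, pickFac f g k i x)
        = ∏ i ∈ Finset.univ.erase k, (1:ℝ) from
      Finset.prod_congr rfl fun i hi => by
        rw [show pickFac f g k i = f i from if_neg (Finset.ne_of_mem_erase hi)]
        exact hval i,
    show pickFac f g k k = fun t => f k t * g t from if_pos rfl]
  simp

end ProdPick

section ContMvn

lemma continuous_mvn_comp {q m : ℕ} (Λ : Matrix (Fin q) (Fin q) ℝ)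
    (μf : (Fin m → ℝ) → (Fin q → ℝ)) (hμf : Continuous μf) :
    Continuous fun w : (Fin q → ℝ) × (Fin m → ℝ) => mvn (μf w.2) Λ w.1 := by
  simp only [mvn, Matrix.mulVec, dotProduct]
  fun_prop

end ContMvn

set_option maxHeartbeats 2000000 in
/-- the posterior mode is a fixed point of the mean of Albert and
Chib's transition density. -/
theorem posterior_mode_fixed_point
    (n p : ℕ) (hn : 1 ≤ n) (hp : 1 ≤ p)
    (X : Matrix (Fin n) (Fin p) ℝ) (Y : Fin n → Bool)
    (v : Fin p → ℝ) (Q : Matrix (Fin p) (Fin p) ℝ) (hQ : Q.PosSemidef)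
    (hSig : IsUnit (Xᵀ * X + Q).det)
    (Bhat : Fin p → ℝ) (hmode : IsPosteriorMode X Y v Q Bhat) :
    (∫ β : Fin p → ℝ, kAC X Y v Q Bhat β • β) = Bhat := by
  classical
  have hdet : (Xᵀ * X + Q).det ≠ 0 := hSig.ne_zero
  have hSpsd : (Xᵀ * X + Q).PosSemidef :=
    Matrix.PosSemidef.add (Matrix.posSemidef_conjTranspose_mul_self X) hQ
  set S : Matrix (Fin p) (Fin p) ℝ := Xᵀ * X + Q with hSdef
  obtain ⟨A, hAA, hA, hdA⟩ : ∃ A : Matrix (Fin p) (Fin p) ℝ,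
      A * A = S ∧ Aᵀ = A ∧ A.det ≠ 0 := by
    open scoped MatrixOrder in
    refine ⟨CFC.sqrt S, CFC.sqrt_mul_sqrt_self S hSpsd.nonneg, (CFC.sqrt_nonneg S).posSemidef.1, fun h => hdet ?_⟩
    open scoped MatrixOrder in
    rw [← CFC.sqrt_mul_sqrt_self S hSpsd.nonneg, Matrix.det_mul, h, mul_zero]
  set θ : Fin n → ℝ := fun i => dotProduct (X i) Bhat with hθdef
  set w : Fin n → ℝ := fun i =>
    if Y i then nphi (θ i) / nPhi (θ i) else -(nphi (θ i) / (1 - nPhi (θ i))) with hwdef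
  set P : (Fin n → ℝ) → ℝ := fun z => ∏ i, tn (θ i) (Y i) (z i) with hPdef
  set μz : (Fin n → ℝ) → (Fin p → ℝ) :=
    fun z => S⁻¹.mulVec (Xᵀ.mulVec z + Q.mulVec v) with hμzdef
  -- basic facts about P
  have hPnn : ∀ z, 0 ≤ P z := fun z => Finset.prod_nonneg fun i _ => tn_nonneg _ _ _
  have hPint : Integrable P := Integrable.fintype_prod fun i => integrable_tn (θ i) (Y i)
  have hPval : ∫ z, P z = 1 := by
    rw [hPdef, MeasureTheory.integral_fintype_prod_volume_eq_prod]
    exact Finset.prod_eq_one fun i _ => integral_tn (θ i) (Y i)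
  have hPmeas : Measurable P := by
    rw [hPdef]
    exact Finset.measurable_prod _ fun i _ =>
      (measurable_tn (θ i) (Y i)).comp (measurable_pi_apply i)
  have hPcoordInt : ∀ i, Integrable (fun z => P z * z i) := fun i =>
    integrable_prod_mul_pick (fun i' => tn (θ i') (Y i')) (fun t => t) i
      (fun i' => integrable_tn (θ i') (Y i'))
      (((integrable_mul_tn (θ i) (Y i)).congr (ae_of_all _ fun t => by ring)))
  have hPabsInt : ∀ i, Integrable (fun z => P z * |z i|) := fun i =>
    integrable_prod_mul_pick (fun i' => tn (θ i') (Y i')) (fun t => |t|) i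
      (fun i' => integrable_tn (θ i') (Y i'))
      (((integrable_abs_mul_tn (θ i) (Y i)).congr (ae_of_all _ fun t => by ring)))
  have hPcoordVal : ∀ i, ∫ z, P z * z i = θ i + w i := by
    intro i
    have h1 := integral_prod_mul_pick (fun i' => tn (θ i') (Y i')) (fun t => t) i
      (fun i' => integral_tn (θ i') (Y i'))
    have h2 : (fun t => tn (θ i) (Y i) t * t) = fun t => t * tn (θ i) (Y i) t :=
      funext fun t => mul_comm _ _
    rw [hPdef]
    refine h1.trans ?_
    rw [h2, integral_mul_tn (θ i) (Y i), hwdef]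
  -- continuity / measurability
  have hcontμ : Continuous μz := by
    rw [hμzdef]
    exact continuous_const.matrix_mulVec
      ((continuous_const.matrix_mulVec continuous_id).add continuous_const)
  have hcontmvn : Continuous fun q : (Fin p → ℝ) × (Fin n → ℝ) => mvn (μz q.2) S⁻¹ q.1 :=
    continuous_mvn_comp S⁻¹ μz hcontμ
  have hF0 : StronglyMeasurable
      (fun q : (Fin p → ℝ) × (Fin n → ℝ) => mvn (μz q.2) S⁻¹ q.1 * P q.2) :=
    (hcontmvn.measurable.mul (hPmeas.comp measurable_snd)).stronglyMeasurable
  have hkAC : ∀ β, kAC X Y v Q Bhat β = ∫ z, mvn (μz z) S⁻¹ β * P z := by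
    intro β
    simp only [kAC, hμzdef, hPdef, hθdef, hSdef]
  -- affine coordinate expansion of μz
  have hμcoord : ∀ (z : Fin n → ℝ) (j : Fin p), μz z j
      = (∑ i, (S⁻¹ * Xᵀ) j i * z i) + (S⁻¹.mulVec (Q.mulVec v)) j := by
    intro z j
    rw [hμzdef]
    simp only [Matrix.mulVec_add, Matrix.mulVec_mulVec, Pi.add_apply]
    try congr 1
    try simp [Matrix.mulVec, dotProduct]
  -- the big per-coordinate computation
  have key : ∀ j : Fin p, Integrable (fun β => kAC X Y v Q Bhat β * β j)
      ∧ ∫ β, kAC X Y v Q Bhat β * β j = μz (fun i => θ i + w i) j := by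
    intro j
    have hHsm : AEStronglyMeasurable
        (fun q : (Fin p → ℝ) × (Fin n → ℝ) => (mvn (μz q.2) S⁻¹ q.1 * P q.2) * q.1 j)
        ((volume : Measure (Fin p → ℝ)).prod volume) :=
      (hF0.mul (((measurable_pi_apply j).comp measurable_fst).stronglyMeasurable)).aestronglyMeasurable
    have hsec : ∀ z : Fin n → ℝ,
        Integrable (fun β => (mvn (μz z) S⁻¹ β * P z) * β j) := fun z =>
      ((integrable_mvn_mul_coord hAA hA hdA hdet (μz z) j).const_mul (P z)).congr
        (ae_of_all _ fun β => by ring)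
    have hnormval : ∀ z : Fin n → ℝ,
        ∫ β, ‖(mvn (μz z) S⁻¹ β * P z) * β j‖
          = P z * ∫ β, mvn (μz z) S⁻¹ β * |β j| := by
      intro z
      have hpt : ∀ β : Fin p → ℝ, ‖(mvn (μz z) S⁻¹ β * P z) * β j‖
          = P z * (mvn (μz z) S⁻¹ β * |β j|) := by
        intro β
        rw [Real.norm_eq_abs, abs_mul, abs_mul, abs_of_nonneg (mvn_nonneg _ _ _),
          abs_of_nonneg (hPnn z)]
        ring
      simp_rw [hpt]
      exact MeasureTheory.integral_const_mul _ _
    have hInt2 : Integrable (fun z => P z * |μz z j|) := by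
      refine Integrable.mono'
        (g := fun z => (∑ i, |(S⁻¹ * Xᵀ) j i| * (P z * |z i|))
          + |(S⁻¹.mulVec (Q.mulVec v)) j| * P z)
        ((integrable_finset_sum _ fun i _ => (hPabsInt i).const_mul _).add
          (hPint.const_mul _))
        ((hPmeas.mul (((continuous_apply j).comp hcontμ).abs.measurable)).aestronglyMeasurable)
        (ae_of_all _ fun z => ?_)
      rw [Real.norm_eq_abs, abs_of_nonneg (mul_nonneg (hPnn z) (abs_nonneg _))]
      have h1 : |μz z j| ≤ (∑ i, |(S⁻¹ * Xᵀ) j i| * |z i|)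
          + |(S⁻¹.mulVec (Q.mulVec v)) j| := by
        rw [hμcoord z j]
        refine (abs_add_le _ _).trans (add_le_add_left ?_ _)
        exact (Finset.abs_sum_le_sum_abs _ _).trans
          (le_of_eq (Finset.sum_congr rfl fun i _ => abs_mul _ _))
      calc P z * |μz z j|
          ≤ P z * ((∑ i, |(S⁻¹ * Xᵀ) j i| * |z i|) + |(S⁻¹.mulVec (Q.mulVec v)) j|) :=
            mul_le_mul_of_nonneg_left h1 (hPnn z)
        _ = (∑ i, |(S⁻¹ * Xᵀ) j i| * (P z * |z i|))
            + |(S⁻¹.mulVec (Q.mulVec v)) j| * P z := by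
            rw [mul_add, Finset.mul_sum]
            congr 1
            · exact Finset.sum_congr rfl fun i _ => by ring
            · ring
    have hDom : Integrable (fun z => P z *
        ((∑ k, |(A⁻¹) j k| * ∫ t : ℝ, |t| * nphi t) + |μz z j|)) := by
      refine ((hPint.mul_const _).add hInt2).congr (ae_of_all _ fun z => by
      simp only [Pi.add_apply]; ring)
    have hnormInt : Integrable (fun z => ∫ β, ‖(mvn (μz z) S⁻¹ β * P z) * β j‖) := by
      refine Integrable.mono' hDom ?_ (ae_of_all _ fun z => ?_)
      · exact ((hF0.mul (((measurable_pi_apply j).comp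
          measurable_fst).stronglyMeasurable)).norm.integral_prod_left').aestronglyMeasurable
      · rw [Real.norm_eq_abs, abs_of_nonneg (integral_nonneg fun β => norm_nonneg _),
          hnormval z]
        exact mul_le_mul_of_nonneg_left
          (integral_mvn_mul_abs_le hAA hA hdA hdet (μz z) j) (hPnn z)
    have hHint : Integrable
        (fun q : (Fin p → ℝ) × (Fin n → ℝ) => (mvn (μz q.2) S⁻¹ q.1 * P q.2) * q.1 j)
        ((volume : Measure (Fin p → ℝ)).prod volume) :=
      (integrable_prod_iff' hHsm).2 ⟨ae_of_all _ hsec, hnormInt⟩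
    have hinner : ∀ β, (∫ z, (mvn (μz z) S⁻¹ β * P z) * β j)
        = kAC X Y v Q Bhat β * β j := by
      intro β
      rw [MeasureTheory.integral_mul_const, hkAC β]
    constructor
    · refine (hHint.integral_prod_left).congr (ae_of_all _ fun β => ?_)
      exact hinner β
    · have hswap := MeasureTheory.integral_integral_swap
        (f := fun (β : Fin p → ℝ) (z : Fin n → ℝ) => (mvn (μz z) S⁻¹ β * P z) * β j) hHint
      have hL : (∫ β, ∫ z, (mvn (μz z) S⁻¹ β * P z) * β j)
          = ∫ β, kAC X Y v Q Bhat β * β j := by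
        exact integral_congr_ae (ae_of_all _ fun β => hinner β)
      have hR : (∫ z, ∫ β, (mvn (μz z) S⁻¹ β * P z) * β j)
          = ∫ z, P z * μz z j := by
        refine integral_congr_ae (ae_of_all _ fun z => ?_)
        have hpt : ∀ β : Fin p → ℝ, (mvn (μz z) S⁻¹ β * P z) * β j
            = P z * (mvn (μz z) S⁻¹ β * β j) := fun β => by ring
        simp_rw [hpt]
        rw [MeasureTheory.integral_const_mul, integral_mvn_mul_coord hAA hA hdA hdet (μz z) j]
      rw [← hL, hswap, hR]
      -- compute ∫ z, P z * μz z j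
      have hexp : ∀ z : Fin n → ℝ, P z * μz z j
          = (∑ i, (S⁻¹ * Xᵀ) j i * (P z * z i)) + (S⁻¹.mulVec (Q.mulVec v)) j * P z := by
        intro z
        rw [hμcoord z j, mul_add, Finset.mul_sum]
        congr 1
        · exact Finset.sum_congr rfl fun i _ => by ring
        · ring
      simp_rw [hexp]
      rw [MeasureTheory.integral_add (integrable_finset_sum _ fun i _ =>
          (hPcoordInt i).const_mul _) (hPint.const_mul _),
        MeasureTheory.integral_finset_sum _ (fun i _ => (hPcoordInt i).const_mul _)]
      simp_rw [MeasureTheory.integral_const_mul]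
      rw [hPval, hμcoord (fun i => θ i + w i) j]
      simp_rw [hPcoordVal]
      ring
  -- final algebra : μz (θ + w) = Bhat
  have hm : μz (fun i => θ i + w i) = Bhat := by
    have h4 : ∑ i, w i • X i = Q.mulVec (Bhat - v) := by
      refine sub_eq_zero.1 ?_
      simp only [hwdef, hθdef]
      exact hmode
    have hXm : Xᵀ.mulVec (fun i => θ i + w i)
        = Xᵀ.mulVec (X.mulVec Bhat) + Q.mulVec (Bhat - v) := by
      funext k
      rw [Pi.add_apply, ← h4]
      simp only [Matrix.mulVec, dotProduct, Matrix.transpose_apply, Finset.sum_apply,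
        Pi.smul_apply, smul_eq_mul, hθdef]
      rw [← Finset.sum_add_distrib]
      exact Finset.sum_congr rfl fun i _ => by ring
    have hfinal : Xᵀ.mulVec (fun i => θ i + w i) + Q.mulVec v = S.mulVec Bhat := by
      rw [hXm, Matrix.mulVec_sub, hSdef, Matrix.add_mulVec, ← Matrix.mulVec_mulVec]
      abel
    rw [hμzdef]
    show S⁻¹.mulVec (Xᵀ.mulVec (fun i => θ i + w i) + Q.mulVec v) = Bhat
    rw [hfinal, Matrix.mulVec_mulVec, Matrix.nonsing_inv_mul S hSig, Matrix.one_mulVec]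
  -- assemble
  have hkSM : StronglyMeasurable (fun β => kAC X Y v Q Bhat β) := by
    have h := MeasureTheory.StronglyMeasurable.integral_prod_right'
      (ν := (volume : Measure (Fin n → ℝ))) hF0
    have h2 : (fun β => kAC X Y v Q Bhat β) = fun β => ∫ z, mvn (μz z) S⁻¹ β * P z :=
      funext hkAC
    rw [h2]
    exact h
  have hGint : Integrable (fun β => kAC X Y v Q Bhat β • β) := by
    refine Integrable.mono' (g := fun β => ∑ i, ‖kAC X Y v Q Bhat β * β i‖)
      (integrable_finset_sum _ fun i _ => ((key i).1).norm)
      ((hkSM.smul stronglyMeasurable_id).aestronglyMeasurable)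
      (ae_of_all _ fun β => ?_)
    refine (pi_norm_le_iff_of_nonneg (Finset.sum_nonneg fun i _ => norm_nonneg _)).2 fun i => ?_
    have : ‖(kAC X Y v Q Bhat β • β) i‖ = ‖kAC X Y v Q Bhat β * β i‖ := by
      simp [Pi.smul_apply, smul_eq_mul]
    rw [this]
    exact Finset.single_le_sum (f := fun i => ‖kAC X Y v Q Bhat β * β i‖)
      (fun i _ => norm_nonneg _) (Finset.mem_univ i)
  funext j
  have hproj := (ContinuousLinearMap.proj (R := ℝ) (φ := fun _ : Fin p => ℝ) j).integral_comp_comm hGint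
  have hproj2 : ∀ β : Fin p → ℝ,
      (ContinuousLinearMap.proj (R := ℝ) (φ := fun _ : Fin p => ℝ) j) (kAC X Y v Q Bhat β • β)
        = kAC X Y v Q Bhat β * β j := by
    intro β
    simp [ContinuousLinearMap.proj_apply, Pi.smul_apply, smul_eq_mul]
  rw [show (∫ β : Fin p → ℝ, kAC X Y v Q Bhat β • β) j
      = (ContinuousLinearMap.proj (R := ℝ) (φ := fun _ : Fin p => ℝ) j)
        (∫ β : Fin p → ℝ, kAC X Y v Q Bhat β • β) from rfl, ← hproj]
  simp_rw [hproj2]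
  rw [(key j).2, hm]
end
end

section
/- Let X₁ be a random vector in ℝ^p with E[X₁X₁ᵀ] finite and positive definite, let G : ℝ^p → (0,1) be measurable, and assume that for the open orthant S_j of ℝ^p and every β ≠ 0 one has P( (1_{S_j}(X₁) + 1_{S_j}(−X₁)) X₁ᵀβ ≠ 0 ) > 0. Then the p×p matrix E[ X₁X₁ᵀ · 1_{S_j}(X₁) · (1 − G(X₁)) ] + E[ X₁X₁ᵀ · 1_{S_j}(−X₁) · G(X₁) ] is positive definite; equivalently its smallest eigenvalue is strictly positive. -/
open MeasureTheory Matrix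

/-- membership of x in the open orthant of ℝ^p determined by the sign pattern s -/
def inOrth {p : ℕ} (s : Fin p → Bool) (x : Fin p → ℝ) : Prop :=
  ∀ k, if s k then 0 < x k else x k < 0

lemma measurableSet_inOrth {p : ℕ} (s : Fin p → Bool) :
    MeasurableSet {x : Fin p → ℝ | inOrth s x} := by
  have h : {x : Fin p → ℝ | inOrth s x}
      = ⋂ k, {x : Fin p → ℝ | if s k then 0 < x k else x k < 0} := by
    ext x; simp [inOrth, Set.mem_iInter]
  rw [h]
  refine MeasurableSet.iInter fun k => ?_
  by_cases hk : s k
  · simp only [hk, if_true]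
    exact measurableSet_lt measurable_const (measurable_pi_apply k)
  · simp only [hk, if_false]
    exact measurableSet_lt (measurable_pi_apply k) measurable_const

set_option maxHeartbeats 1000000 in
open Classical in
/-- under (A2) and the orthant condition (A3) for the orthant S
determined by the sign pattern `s`, the matrix
E[X₁X₁ᵀ 1_S(X₁)(1−G(X₁))] + E[X₁X₁ᵀ 1_S(−X₁) G(X₁)] is positive definite. -/
theorem orthant_second_moment_posdef
    (p : ℕ) (hp : 1 ≤ p)
    (Ω : Type*) [MeasurableSpace Ω] (P : Measure Ω) [IsProbabilityMeasure P]
    (X1 : Ω → Fin p → ℝ) (hX1 : Measurable X1)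
    (G : (Fin p → ℝ) → ℝ) (hG : Measurable G) (hGrange : ∀ x, G x ∈ Set.Ioo (0 : ℝ) 1)
    (hint : ∀ k l, Integrable (fun ω => X1 ω k * X1 ω l) P)
    (hpd : (Matrix.of fun k l => ∫ ω, X1 ω k * X1 ω l ∂P).PosDef)
    (s : Fin p → Bool)
    (hA3 : ∀ β : Fin p → ℝ, β ≠ 0 →
      0 < P {ω | ((if inOrth s (X1 ω) then (1 : ℝ) else 0) +
                  (if inOrth s (-(X1 ω)) then (1 : ℝ) else 0)) * dotProduct (X1 ω) β ≠ 0}) :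
    (Matrix.of fun k l =>
        (∫ ω, X1 ω k * X1 ω l * (if inOrth s (X1 ω) then (1 : ℝ) else 0) * (1 - G (X1 ω)) ∂P)
      + (∫ ω, X1 ω k * X1 ω l * (if inOrth s (-(X1 ω)) then (1 : ℝ) else 0) * G (X1 ω) ∂P)).PosDef := by
  classical
  set i₁ : Ω → ℝ := fun ω => if inOrth s (X1 ω) then (1 : ℝ) else 0 with hi₁def
  set i₂ : Ω → ℝ := fun ω => if inOrth s (-(X1 ω)) then (1 : ℝ) else 0 with hi₂def
  set w : Ω → ℝ := fun ω => i₁ ω * (1 - G (X1 ω)) + i₂ ω * G (X1 ω) with hwdef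
  -- measurability facts
  have hXk : ∀ k, Measurable (fun ω => X1 ω k) := fun k => (measurable_pi_apply k).comp hX1
  have hmi₁ : Measurable i₁ := by
    refine Measurable.ite ?_ measurable_const measurable_const
    exact hX1 (measurableSet_inOrth s)
  have hmi₂ : Measurable i₂ := by
    refine Measurable.ite ?_ measurable_const measurable_const
    exact hX1 ((measurableSet_inOrth s).preimage measurable_neg)
  have hmG : Measurable (fun ω => G (X1 ω)) := hG.comp hX1
  -- bounds
  have hi₁01 : ∀ ω, i₁ ω = 0 ∨ i₁ ω = 1 := by
    intro ω; by_cases h : inOrth s (X1 ω) <;> simp [hi₁def, h]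
  have hi₂01 : ∀ ω, i₂ ω = 0 ∨ i₂ ω = 1 := by
    intro ω; by_cases h : inOrth s (-(X1 ω)) <;> simp [hi₂def, h]
  -- integrability of the two pieces
  have hint1 : ∀ k l, Integrable (fun ω => X1 ω k * X1 ω l * i₁ ω * (1 - G (X1 ω))) P := by
    intro k l
    refine (hint k l).mono
      ((((hXk k).mul (hXk l)).mul hmi₁).mul (measurable_const.sub hmG)).aestronglyMeasurable ?_
    filter_upwards with ω
    have hg := hGrange (X1 ω)
    have h1 : |i₁ ω| ≤ 1 := by rcases hi₁01 ω with h | h <;> simp [h]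
    have h2 : |1 - G (X1 ω)| ≤ 1 := by
      rw [abs_le]; constructor <;> linarith [hg.1, hg.2]
    simp only [Real.norm_eq_abs, abs_mul]
    calc |X1 ω k| * |X1 ω l| * |i₁ ω| * |1 - G (X1 ω)|
        ≤ |X1 ω k| * |X1 ω l| * 1 * 1 := by
          gcongr <;> positivity
      _ = |X1 ω k| * |X1 ω l| := by ring
  have hint2 : ∀ k l, Integrable (fun ω => X1 ω k * X1 ω l * i₂ ω * G (X1 ω)) P := by
    intro k l
    refine (hint k l).mono
      ((((hXk k).mul (hXk l)).mul hmi₂).mul hmG).aestronglyMeasurable ?_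
    filter_upwards with ω
    have hg := hGrange (X1 ω)
    have h1 : |i₂ ω| ≤ 1 := by rcases hi₂01 ω with h | h <;> simp [h]
    have h2 : |G (X1 ω)| ≤ 1 := by
      rw [abs_le]; constructor <;> linarith [hg.1, hg.2]
    simp only [Real.norm_eq_abs, abs_mul]
    calc |X1 ω k| * |X1 ω l| * |i₂ ω| * |G (X1 ω)|
        ≤ |X1 ω k| * |X1 ω l| * 1 * 1 := by
          gcongr <;> positivity
      _ = |X1 ω k| * |X1 ω l| := by ring
  have hintw : ∀ k l, Integrable (fun ω => X1 ω k * X1 ω l * w ω) P := by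
    intro k l
    refine ((hint1 k l).add (hint2 k l)).congr (Filter.Eventually.of_forall fun ω => ?_)
    simp only [Pi.add_apply, hwdef]; ring
  -- entries of the matrix
  have hM : ∀ k l, (Matrix.of fun k l =>
        (∫ ω, X1 ω k * X1 ω l * i₁ ω * (1 - G (X1 ω)) ∂P)
      + (∫ ω, X1 ω k * X1 ω l * i₂ ω * G (X1 ω) ∂P)) k l
      = ∫ ω, X1 ω k * X1 ω l * w ω ∂P := by
    intro k l
    show (∫ ω, X1 ω k * X1 ω l * i₁ ω * (1 - G (X1 ω)) ∂P)
      + (∫ ω, X1 ω k * X1 ω l * i₂ ω * G (X1 ω) ∂P) = _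
    rw [← integral_add (hint1 k l) (hint2 k l)]
    refine integral_congr_ae (Filter.Eventually.of_forall fun ω => ?_)
    simp only [hwdef]; ring
  rw [posDef_iff_dotProduct_mulVec]
  constructor
  · -- Hermitian
    ext k l
    simp only [conjTranspose_apply, Matrix.of_apply, star_trivial]
    congr 1
    · exact integral_congr_ae (Filter.Eventually.of_forall fun ω => by ring)
    · exact integral_congr_ae (Filter.Eventually.of_forall fun ω => by ring)
  · intro β hβ
    have h1 : ∀ k l, Integrable (fun ω => β k * β l * (X1 ω k * X1 ω l * w ω)) P :=
      fun k l => (hintw k l).const_mul _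
    have hkey : ∀ ω, ∑ k, ∑ l, β k * β l * (X1 ω k * X1 ω l * w ω)
        = (X1 ω ⬝ᵥ β) ^ 2 * w ω := by
      intro ω
      rw [sq, dotProduct, Finset.sum_mul_sum, Finset.sum_mul]
      refine Finset.sum_congr rfl fun k _ => ?_
      rw [Finset.sum_mul]
      exact Finset.sum_congr rfl fun l _ => by ring
    have hd : star β ⬝ᵥ ((Matrix.of fun k l =>
        (∫ ω, X1 ω k * X1 ω l * i₁ ω * (1 - G (X1 ω)) ∂P)
      + (∫ ω, X1 ω k * X1 ω l * i₂ ω * G (X1 ω) ∂P)) *ᵥ β)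
        = ∫ ω, (X1 ω ⬝ᵥ β) ^ 2 * w ω ∂P := by
      calc star β ⬝ᵥ _
          = ∑ k, ∑ l, β k * β l * ∫ ω, X1 ω k * X1 ω l * w ω ∂P := by
            simp only [dotProduct, mulVec, star_trivial, hM, Finset.mul_sum]
            exact Finset.sum_congr rfl fun k _ => Finset.sum_congr rfl fun l _ => by ring
        _ = ∑ k, ∑ l, ∫ ω, β k * β l * (X1 ω k * X1 ω l * w ω) ∂P := by
            refine Finset.sum_congr rfl fun k _ => Finset.sum_congr rfl fun l _ => ?_
            rw [integral_const_mul]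
        _ = ∑ k, ∫ ω, ∑ l, β k * β l * (X1 ω k * X1 ω l * w ω) ∂P :=
            Finset.sum_congr rfl fun k _ =>
              (integral_finset_sum _ fun l _ => h1 k l).symm
        _ = ∫ ω, ∑ k, ∑ l, β k * β l * (X1 ω k * X1 ω l * w ω) ∂P :=
            (integral_finset_sum _ fun k _ =>
              integrable_finset_sum _ fun l _ => h1 k l).symm
        _ = ∫ ω, (X1 ω ⬝ᵥ β) ^ 2 * w ω ∂P :=
            integral_congr_ae (Filter.Eventually.of_forall fun ω => hkey ω)
    rw [hd]
    have hw0 : ∀ ω, 0 ≤ w ω := by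
      intro ω
      have hg := hGrange (X1 ω)
      rcases hi₁01 ω with h1 | h1 <;> rcases hi₂01 ω with h2 | h2 <;>
        simp only [hwdef, h1, h2] <;> nlinarith [hg.1, hg.2]
    have hfi : Integrable (fun ω => (X1 ω ⬝ᵥ β) ^ 2 * w ω) P := by
      refine (integrable_finset_sum _ fun k _ =>
        integrable_finset_sum _ fun l _ => h1 k l).congr
        (Filter.Eventually.of_forall fun ω => hkey ω)
    rw [integral_pos_iff_support_of_nonneg
      (fun ω => mul_nonneg (sq_nonneg _) (hw0 ω)) hfi]
    have hsupp : Function.support (fun ω => (X1 ω ⬝ᵥ β) ^ 2 * w ω)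
        = {ω | (i₁ ω + i₂ ω) * (X1 ω ⬝ᵥ β) ≠ 0} := by
      ext ω
      have hg := hGrange (X1 ω)
      have hw : w ω = 0 ↔ i₁ ω + i₂ ω = 0 := by
        rcases hi₁01 ω with h1 | h1 <;> rcases hi₂01 ω with h2 | h2 <;>
          simp only [hwdef, h1, h2] <;> constructor <;> intro h <;> linarith [hg.1, hg.2]
      simp only [Function.mem_support, Set.mem_setOf_eq, ne_eq]
      constructor
      · intro h
        have hd0 : X1 ω ⬝ᵥ β ≠ 0 := fun h0 => h (by simp [h0])
        have hw0' : w ω ≠ 0 := fun h0 => h (by simp [h0])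
        exact mul_ne_zero (fun h0 => hw0' (hw.2 h0)) hd0
      · intro h
        rcases mul_ne_zero_iff.1 h with ⟨hs, hd⟩
        exact mul_ne_zero (pow_ne_zero _ hd) fun h0 => hs (hw.1 h0)
    rw [hsupp]
    exact hA3 β hβ
end
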